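/- arXiv:2009.14488 — 11 statements merged into one kernel-verified Lean document; each statement's English description precedes it below -/
import Mathlib

section
/- Let m ≥ 1 be an integer, δ_1,…,δ_m ∈ {+1,−1}, and let δ be the (+1,δ_1,…,δ_m)-Thue–Morse sequence. If |p(m+1)| > 1, then there exists a unique nonempty compact set K ⊆ ℂ such that the rescaled polygonal paths (p(m+1))^{−n}·P(n) converge to K in the Hausdorff metric as n → ∞, and moreover K is a continuous image of the interval [0,1] (i.e. there is a continuous map f : [0,1] → ℂ with K = f([0,1])). -/
open Complex Filter Metric Set
open scoped Real Topology Pointwise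

noncomputable section
namespace GenKoch


/-- The basic rotation factors. -/
def E (m k : ℕ) : ℂ := Complex.exp (2 * Real.pi * Complex.I * k / m)

lemma E_add (m a b : ℕ) : E m (a + b) = E m a * E m b := by
  rw [E, E, E, ← Complex.exp_add]
  congr 1
  push_cast
  ring

lemma E_m (m : ℕ) (hm : 1 ≤ m) : E m m = 1 := by
  have hm0 : (m : ℂ) ≠ 0 := by exact_mod_cast Nat.one_le_iff_ne_zero.mp hm
  rw [E, mul_div_assoc, div_self hm0, mul_one, Complex.exp_two_pi_mul_I]

lemma E_add_mul (m : ℕ) (hm : 1 ≤ m) (a c : ℕ) : E m (a + m * c) = E m a := by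
  induction c with
  | zero => simp
  | succ c ih =>
    have : a + m * (c + 1) = (a + m * c) + m := by ring
    rw [this, E_add, E_m m hm, mul_one, ih]

lemma E_abs (m k : ℕ) : ‖E m k‖ = 1 := by
  rw [E]
  have : (2 * (Real.pi:ℂ) * Complex.I * k / m) = ((2 * Real.pi * k / m : ℝ) : ℂ) * Complex.I := by
    push_cast; ring
  rw [this, Complex.norm_exp_ofReal_mul_I]

section p
variable (m : ℕ) (δ : ℕ → ℝ) (p : ℕ → ℂ)

lemma pstep (hp : ∀ n, p n = ∑ k ∈ Finset.range n,
      (δ k : ℂ) * Complex.exp (2 * Real.pi * Complex.I * k / m)) (k : ℕ) :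
    p (k + 1) = p k + (δ k : ℂ) * E m k := by
  rw [hp, hp, Finset.sum_range_succ]; rfl

lemma pzero (hp : ∀ n, p n = ∑ k ∈ Finset.range n,
      (δ k : ℂ) * Complex.exp (2 * Real.pi * Complex.I * k / m)) : p 0 = 0 := by
  rw [hp]; simp

lemma pdiff (hδpm : ∀ n, δ n = 1 ∨ δ n = -1)
    (hp : ∀ n, p n = ∑ k ∈ Finset.range n,
      (δ k : ℂ) * Complex.exp (2 * Real.pi * Complex.I * k / m)) :
    ∀ a b : ℕ, b ≤ a → ‖p a - p b‖ ≤ (a : ℝ) - b := by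
  intro a b hba
  induction a, hba using Nat.le_induction with
  | base => simp
  | succ a ha ih =>
    have habs : ‖(δ a : ℂ) * E m a‖ = 1 := by
      rw [norm_mul, E_abs, mul_one, Complex.norm_real, Real.norm_eq_abs]
      rcases hδpm a with h | h <;> simp [h]
    calc ‖p (a + 1) - p b‖
        = ‖(p a - p b) + (δ a : ℂ) * E m a‖ := by
          rw [pstep m δ p hp a]; ring_nf
      _ ≤ ‖p a - p b‖ + ‖(δ a : ℂ) * E m a‖ :=
          norm_add_le _ _
      _ ≤ ((a : ℝ) - b) + 1 := by rw [habs]; linarith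
      _ = ((a : ℝ) + 1) - b := by ring
      _ = ((a + 1 : ℕ) : ℝ) - b := by push_cast; ring

variable (hm : 1 ≤ m)
variable (hδrec : ∀ q k, k ≤ m → δ ((m + 1) * q + k) = δ q * δ k)
variable (hp : ∀ n, p n = ∑ k ∈ Finset.range n,
      (δ k : ℂ) * Complex.exp (2 * Real.pi * Complex.I * k / m))

include hm hδrec hp in
lemma pA (q : ℕ) : ∀ k, k ≤ m + 1 →
    p ((m + 1) * q + k) = p ((m + 1) * q) + (δ q : ℂ) * E m q * p k := by
  intro k hk
  induction k with
  | zero => rw [pzero m δ p hp]; simp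
  | succ k ih =>
    have hk' : k ≤ m := by omega
    have hE : E m ((m + 1) * q + k) = E m q * E m k := by
      rw [show (m + 1) * q + k = (q + k) + m * q by ring, E_add_mul m hm, E_add]
    rw [show (m + 1) * q + (k + 1) = ((m + 1) * q + k) + 1 by ring,
      pstep m δ p hp, ih (by omega), hδrec q k hk', hE, pstep m δ p hp k]
    push_cast
    ring

include hm hδrec hp in
lemma pB : ∀ q, p ((m + 1) * q) = p (m + 1) * p q := by
  intro q
  induction q with
  | zero => rw [mul_zero, pzero m δ p hp, mul_zero]
  | succ q ih =>
    rw [show (m + 1) * (q + 1) = (m + 1) * q + (m + 1) by ring,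
      pA m δ p hm hδrec hp q (m + 1) le_rfl, ih, pstep m δ p hp q]
    ring
end p



/-- Piecewise-linear interpolation of `p`. -/
def gfun (p : ℕ → ℂ) (t : ℝ) : ℂ :=
  p ⌊t⌋₊ + ((t - ⌊t⌋₊ : ℝ) : ℂ) * (p (⌊t⌋₊ + 1) - p ⌊t⌋₊)

/-- A manifestly continuous version on `[0, N]`. -/
def Gfun (p : ℕ → ℂ) (N : ℕ) (t : ℝ) : ℂ :=
  p 0 + ∑ k ∈ Finset.range N, ((min 1 (max 0 (t - k)) : ℝ) : ℂ) * (p (k + 1) - p k)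

lemma Gfun_continuous (p : ℕ → ℂ) (N : ℕ) : Continuous (Gfun p N) := by
  unfold Gfun
  fun_prop

lemma gval (p : ℕ → ℂ) (k : ℕ) (t : ℝ) (h1 : (k : ℝ) ≤ t) (h2 : t ≤ k + 1) :
    gfun p t = p k + ((t - k : ℝ) : ℂ) * (p (k + 1) - p k) := by
  by_cases h : t < k + 1
  · have hf : ⌊t⌋₊ = k := by
      rw [Nat.floor_eq_iff (le_trans (Nat.cast_nonneg k) h1)]
      exact ⟨h1, by exact_mod_cast h⟩
    rw [gfun, hf]
  · have ht : t = (k : ℝ) + 1 := le_antisymm h2 (not_lt.mp h)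
    have hf : ⌊t⌋₊ = k + 1 := by
      rw [ht, show ((k : ℝ) + 1) = ((k + 1 : ℕ) : ℝ) by push_cast; ring, Nat.floor_natCast]
    rw [gfun, hf, ht]
    push_cast
    ring

lemma gval_nat (p : ℕ → ℂ) (k : ℕ) : gfun p (k : ℝ) = p k := by
  rw [gval p k _ le_rfl (by linarith)]
  simp

lemma gfun_eq_Gfun (p : ℕ → ℂ) (N : ℕ) (t : ℝ) (h0 : 0 ≤ t) (hN : t ≤ N) :
    gfun p t = Gfun p N t := by
  set q := ⌊t⌋₊ with hq
  have hqt : (q : ℝ) ≤ t := Nat.floor_le h0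
  have htq : t < q + 1 := Nat.lt_floor_add_one t
  have hqN : q ≤ N := by
    have := Nat.floor_le_floor hN
    rwa [Nat.floor_natCast] at this
  have hsum1 : ∑ k ∈ Finset.range q, ((min 1 (max 0 (t - k)) : ℝ) : ℂ) * (p (k + 1) - p k)
      = p q - p 0 := by
    rw [← Finset.sum_range_sub (fun i => p i) q]
    apply Finset.sum_congr rfl
    intro k hk
    have hk' : (k : ℝ) + 1 ≤ q := by
      have : k + 1 ≤ q := Finset.mem_range.mp hk
      exact_mod_cast this
    have h1 : (1 : ℝ) ≤ t - k := by linarith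
    rw [max_eq_right (by linarith), min_eq_left h1]
    simp
  have hsum2 : ∑ k ∈ Finset.Ico q N, ((min 1 (max 0 (t - k)) : ℝ) : ℂ) * (p (k + 1) - p k)
      = ((t - q : ℝ) : ℂ) * (p (q + 1) - p q) := by
    rcases eq_or_lt_of_le hqN with hEq | hlt
    · have ht' : t = (q : ℝ) := le_antisymm (hEq ▸ hN) hqt
      rw [← hEq]
      simp [ht']
    · rw [Finset.sum_eq_single_of_mem q (Finset.mem_Ico.mpr ⟨le_rfl, hlt⟩)]
      · congr 2
        rw [max_eq_right (by linarith), min_eq_right (by linarith)]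
      · intro k hk hne
        have hk1 : q + 1 ≤ k := by
          rcases Finset.mem_Ico.mp hk with ⟨h', _⟩
          omega
        have : t - k ≤ 0 := by
          have : (q : ℝ) + 1 ≤ k := by exact_mod_cast hk1
          linarith
        rw [max_eq_left this]
        simp
  rw [Gfun, ← Finset.sum_range_add_sum_Ico _ hqN, hsum1, hsum2, gfun]
  ring

/-- The image of `[0,N]` under `gfun` is the polygonal path. -/
lemma gfun_image (p : ℕ → ℂ) (N : ℕ) (hN : 1 ≤ N) :
    gfun p '' Set.Icc (0 : ℝ) N = ⋃ k ∈ Finset.Icc 1 N, segment ℝ (p (k - 1)) (p k) := by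
  ext z
  simp only [mem_image, Set.mem_iUnion, exists_prop]
  constructor
  · rintro ⟨t, ⟨ht0, htN⟩, rfl⟩
    by_cases hq : ⌊t⌋₊ < N
    · refine ⟨⌊t⌋₊ + 1, Finset.mem_Icc.mpr ⟨by omega, by omega⟩, ?_⟩
      have hqt : (⌊t⌋₊ : ℝ) ≤ t := Nat.floor_le ht0
      have htq : t < ⌊t⌋₊ + 1 := Nat.lt_floor_add_one t
      rw [show ⌊t⌋₊ + 1 - 1 = ⌊t⌋₊ by omega, segment_eq_image']
      exact ⟨t - ⌊t⌋₊, ⟨by linarith, by linarith⟩, by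
        simp only [Complex.real_smul]; rw [gfun]⟩
    · have hNt : (N : ℝ) ≤ t := by
        have h1 : (N : ℝ) ≤ (⌊t⌋₊ : ℝ) := by exact_mod_cast not_lt.mp hq
        have h2 : (⌊t⌋₊ : ℝ) ≤ t := Nat.floor_le ht0
        linarith
      have ht : t = (N : ℝ) := le_antisymm htN hNt
      refine ⟨N, Finset.mem_Icc.mpr ⟨hN, le_rfl⟩, ?_⟩
      rw [ht, gval_nat]
      exact right_mem_segment ℝ _ _
  · rintro ⟨k, hk, hz⟩
    rcases Finset.mem_Icc.mp hk with ⟨hk1, hkN⟩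
    rw [segment_eq_image'] at hz
    obtain ⟨θ, ⟨hθ0, hθ1⟩, rfl⟩ := hz
    have hcast : ((k - 1 : ℕ) : ℝ) = (k : ℝ) - 1 := by
      rw [Nat.cast_sub hk1]; simp
    refine ⟨((k - 1 : ℕ) : ℝ) + θ, ⟨by positivity, ?_⟩, ?_⟩
    · have : (k : ℝ) ≤ N := by exact_mod_cast hkN
      rw [hcast]; linarith
    · rw [gval p (k - 1) _ (by linarith) (by linarith)]
      rw [Nat.sub_add_cancel hk1]
      simp [Complex.real_smul]




/-- Key contraction estimate. -/
lemma gcontract (m : ℕ) (p : ℕ → ℂ) (hp0 : p 0 = 0)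
    (hmul : ∀ q, p ((m + 1) * q) = p (m + 1) * p q)
    (hdiff : ∀ a b : ℕ, b ≤ a → ‖p a - p b‖ ≤ (a : ℝ) - b)
    (t : ℝ) (ht : 0 ≤ t) :
    ‖gfun p (((m : ℝ) + 1) * t) - p (m + 1) * gfun p t‖ ≤ 2 * m + 2 := by
  have hstep1 : ∀ k : ℕ, ‖p (k + 1) - p k‖ ≤ 1 := by
    intro k
    have := hdiff (k + 1) k (by omega)
    push_cast at this
    linarith
  have hlam : ‖p (m + 1)‖ ≤ (m : ℝ) + 1 := by
    have := hdiff (m + 1) 0 (by omega)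
    rw [hp0, sub_zero] at this
    push_cast at this
    linarith
  set q := ⌊t⌋₊ with hqdef
  set u := ((m : ℝ) + 1) * t with hudef
  have hu0 : 0 ≤ u := by positivity
  set j := ⌊u⌋₊ with hjdef
  have hqt : (q : ℝ) ≤ t := Nat.floor_le ht
  have htq : t < q + 1 := Nat.lt_floor_add_one t
  have hju : (j : ℝ) ≤ u := Nat.floor_le hu0
  have huj : u < j + 1 := Nat.lt_floor_add_one u
  have hjlo : (m + 1) * q ≤ j := by
    apply Nat.le_floor
    push_cast
    have : (0:ℝ) ≤ (m:ℝ) + 1 := by positivity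
    nlinarith
  have hjhi : j ≤ (m + 1) * q + m := by
    have h' : u < (((m + 1) * q + m + 1 : ℕ) : ℝ) := by push_cast; nlinarith
    have := Nat.floor_lt hu0 |>.mpr h'
    omega
  clear_value q u j
  have key1 : ‖gfun p u - p ((m + 1) * q)‖ ≤ (m : ℝ) + 1 := by
    have h1 : ‖p j - p ((m + 1) * q)‖ ≤ (m : ℝ) := by
      have := hdiff j ((m + 1) * q) hjlo
      have h2 : (j : ℝ) ≤ (((m + 1) * q + m : ℕ) : ℝ) := by exact_mod_cast hjhi
      push_cast at h2 this
      linarith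
    have h2 : ‖((u - j : ℝ) : ℂ) * (p (j + 1) - p j)‖ ≤ 1 := by
      rw [norm_mul, Complex.norm_real, Real.norm_eq_abs, _root_.abs_of_nonneg (by linarith : (0:ℝ) ≤ u - j)]
      have := hstep1 j
      nlinarith [norm_nonneg (p (j + 1) - p j), hju, huj]
    calc ‖gfun p u - p ((m + 1) * q)‖
        = ‖(p j - p ((m + 1) * q)) + ((u - j : ℝ) : ℂ) * (p (j + 1) - p j)‖ := by
          rw [gfun, ← hjdef]; congr 1; ring
      _ ≤ _ + _ := norm_add_le _ _
      _ ≤ (m : ℝ) + 1 := by linarith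
  have key2 : ‖p (m + 1) * gfun p t - p ((m + 1) * q)‖ ≤ (m : ℝ) + 1 := by
    have : p (m + 1) * gfun p t - p ((m + 1) * q)
        = ((t - q : ℝ) : ℂ) * (p (m + 1) * (p (q + 1) - p q)) := by
      rw [gfun, ← hqdef, hmul q]; ring
    rw [this, norm_mul, norm_mul, Complex.norm_real, Real.norm_eq_abs,
      _root_.abs_of_nonneg (by linarith : (0:ℝ) ≤ t - q)]
    have h1 := hstep1 q
    have h2 : t - (q : ℝ) ≤ 1 := by linarith
    have h0 : 0 ≤ t - (q : ℝ) := by linarith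
    have hLS : ‖p (m + 1)‖ * ‖p (q + 1) - p q‖ ≤ ((m : ℝ) + 1) * 1 :=
      mul_le_mul hlam h1 (norm_nonneg _) (by positivity)
    nlinarith [norm_nonneg (p (m + 1)), norm_nonneg (p (q + 1) - p q)]
  calc ‖gfun p u - p (m + 1) * gfun p t‖
      ≤ ‖gfun p u - p ((m + 1) * q)‖
        + ‖p ((m + 1) * q) - p (m + 1) * gfun p t‖ :=
        norm_sub_le_norm_sub_add_norm_sub _ _ _
    _ = ‖gfun p u - p ((m + 1) * q)‖
        + ‖p (m + 1) * gfun p t - p ((m + 1) * q)‖ := by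
        rw [norm_sub_rev (p ((m + 1) * q))]
    _ ≤ 2 * m + 2 := by linarith


end GenKoch

namespace GenKochL


/-- Abstract uniform-limit machine with geometric error control. -/
lemma uniform_limit_exists (fn : ℕ → ℝ → ℂ) (C r : ℝ) (hC : 0 ≤ C)
    (hr0 : 0 < r) (hr1 : r < 1)
    (hcont : ∀ n, ContinuousOn (fn n) (Set.Icc 0 1))
    (hstepb : ∀ n, ∀ x ∈ Set.Icc (0 : ℝ) 1,
      ‖fn (n + 1) x - fn n x‖ ≤ C * r ^ (n + 1)) :
    ∃ f : ℝ → ℂ, ContinuousOn f (Set.Icc 0 1) ∧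
      ∀ n, ∀ x ∈ Set.Icc (0 : ℝ) 1,
        ‖f x - fn n x‖ ≤ (C * r / (1 - r)) * r ^ n := by
  have h1r : 0 < 1 - r := by linarith
  set d : ℕ → ℝ → ℂ := fun k x => fn (k + 1) x - fn k x with hddef
  have hu : Summable fun k => C * r ^ (k + 1) := by
    have h := (summable_geometric_of_lt_one hr0.le hr1).mul_left (C * r)
    apply h.congr
    intro k
    rw [pow_succ]
    ring
  have hsummable : ∀ x ∈ Set.Icc (0 : ℝ) 1, Summable fun k => d k x := by
    intro x hx
    apply Summable.of_norm_bounded hu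
    intro k
    exact hstepb k x hx
  have htail : ∀ n, ∀ x ∈ Set.Icc (0 : ℝ) 1,
      ‖(fn 0 x + ∑' k, d k x) - fn n x‖ ≤ (C * r / (1 - r)) * r ^ n := by
    intro n x hx
    have hs := hsummable x hx
    have heq : (fn 0 x + ∑' k, d k x) - fn n x = ∑' k, d (k + n) x := by
      have htel : fn n x = fn 0 x + ∑ k ∈ Finset.range n, d k x := by
        rw [hddef]
        rw [Finset.sum_range_sub (fun k => fn k x)]
        ring
      rw [htel, ← hs.sum_add_tsum_nat_add n]
      ring
    have hu' : Summable fun k => C * r ^ (k + n + 1) :=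
      (summable_nat_add_iff n).mpr hu |>.congr (fun k => by ring_nf)
    have hsn : Summable fun k => ‖d (k + n) x‖ := by
      apply Summable.of_nonneg_of_le (fun k => norm_nonneg _) (fun k => ?_) hu'
      exact hstepb (k + n) x hx
    have hbound : ∀ k, ‖d (k + n) x‖ ≤ C * r ^ (k + n + 1) := by
      intro k
      exact hstepb (k + n) x hx
    calc ‖(fn 0 x + ∑' k, d k x) - fn n x‖ = ‖∑' k, d (k + n) x‖ := by
          rw [heq]
      _ ≤ ∑' k, ‖d (k + n) x‖ := norm_tsum_le_tsum_norm hsn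
      _ ≤ ∑' k, C * r ^ (k + n + 1) := Summable.tsum_le_tsum hbound hsn hu'
      _ = (C * r ^ (n + 1)) * ∑' k : ℕ, r ^ k := by
          rw [← tsum_mul_left]
          apply tsum_congr
          intro k
          ring
      _ = (C * r ^ (n + 1)) * (1 - r)⁻¹ := by
          rw [tsum_geometric_of_lt_one hr0.le hr1]
      _ = (C * r / (1 - r)) * r ^ n := by
          rw [pow_succ]
          field_simp
  refine ⟨fun x => fn 0 x + ∑' k, d k x, ?_, htail⟩
  · have hB0 : 0 ≤ C * r / (1 - r) := by positivity
    have hgeo : Tendsto (fun n => (C * r / (1 - r)) * r ^ n) atTop (𝓝 0) := by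
      have := tendsto_pow_atTop_nhds_zero_of_lt_one hr0.le hr1
      simpa using this.const_mul (C * r / (1 - r))
    have hTU : TendstoUniformlyOn fn (fun x => fn 0 x + ∑' k, d k x) atTop
        (Set.Icc 0 1) := by
      rw [Metric.tendstoUniformlyOn_iff]
      intro ε hε
      filter_upwards [hgeo.eventually (gt_mem_nhds hε)] with n hn x hx
      rw [Complex.dist_eq]
      calc ‖(fn 0 x + ∑' k, d k x) - fn n x‖
          ≤ (C * r / (1 - r)) * r ^ n := htail n x hx
        _ < ε := hn
    exact hTU.continuousOn (Filter.Eventually.of_forall hcont).frequently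

end GenKochL
end

open GenKoch in
/-- For the generalized Thue–Morse sequence `δ` with `|p(m+1)| > 1`, there is a
unique nonempty compact `K ⊆ ℂ` to which the rescaled polygonal paths
`(p(m+1))⁻ⁿ • P(n)` converge in the Hausdorff metric, and `K` is a continuous image
of `[0,1]`. -/
theorem generalized_koch_curve_exists_unique
    (m : ℕ) (hm : 1 ≤ m)
    (δ : ℕ → ℝ) (hδ0 : δ 0 = 1)
    (hδpm : ∀ n, δ n = 1 ∨ δ n = -1)
    (hδrec : ∀ q k, k ≤ m → δ ((m + 1) * q + k) = δ q * δ k)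
    (p : ℕ → ℂ)
    (hp : ∀ n, p n = ∑ k ∈ Finset.range n,
      (δ k : ℂ) * Complex.exp (2 * Real.pi * Complex.I * k / m))
    (P : ℕ → Set ℂ)
    (hP : ∀ n, P n = ⋃ k ∈ Finset.Icc 1 ((m + 1) ^ n), segment ℝ (p (k - 1)) (p k))
    (hbig : 1 < ‖p (m + 1)‖) :
    ∃ K : Set ℂ, K.Nonempty ∧ IsCompact K ∧
      Tendsto (fun n => hausdorffDist (((p (m + 1)) ^ n)⁻¹ • P n) K) atTop (𝓝 0) ∧
      (∀ K' : Set ℂ, K'.Nonempty → IsCompact K' →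
        Tendsto (fun n => hausdorffDist (((p (m + 1)) ^ n)⁻¹ • P n) K') atTop (𝓝 0) →
        K' = K) ∧
      ∃ f : ℝ → ℂ, ContinuousOn f (Set.Icc 0 1) ∧ f '' Set.Icc 0 1 = K := by
  classical
  set lam : ℂ := p (m + 1) with hlamdef
  have hp0 : p 0 = 0 := pzero m δ p hp
  have hdiff := pdiff m δ p hδpm hp
  have hmul : ∀ q, p ((m + 1) * q) = lam * p q := pB m δ p hm hδrec hp
  have hR1 : (1 : ℝ) < ‖lam‖ := hbig
  set r : ℝ := (‖lam‖)⁻¹ with hrdef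
  have hr0 : 0 < r := inv_pos.mpr (by linarith)
  have hr1 : r < 1 := by
    rw [hrdef]
    exact inv_lt_one_of_one_lt₀ hR1
  have h1r : 0 < 1 - r := by linarith
  set C : ℝ := 2 * m + 2 with hCdef
  have hC0 : 0 < C := by positivity
  set M : ℝ := (m : ℝ) + 1 with hMdef
  have hM0 : 0 < M := by positivity
  set fn : ℕ → ℝ → ℂ := fun n x => (lam ^ n)⁻¹ * gfun p (M ^ n * x) with hfndef
  -- continuity of the approximants
  have hcont : ∀ n, ContinuousOn (fn n) (Set.Icc 0 1) := by
    intro n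
    have heq : ∀ x ∈ Set.Icc (0 : ℝ) 1,
        (lam ^ n)⁻¹ * Gfun p ((m + 1) ^ n) (M ^ n * x) = fn n x := by
      intro x hx
      rcases hx with ⟨hx0, hx1⟩
      have h0 : 0 ≤ M ^ n * x := mul_nonneg (by positivity) hx0
      have h1 : M ^ n * x ≤ (((m + 1) ^ n : ℕ) : ℝ) := by
        have hcast : (((m + 1) ^ n : ℕ) : ℝ) = M ^ n := by
          rw [hMdef]; push_cast; ring
        rw [hcast]
        nlinarith [pow_pos hM0 n]
      simp only [hfndef]
      rw [gfun_eq_Gfun p _ _ h0 h1]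
    apply ContinuousOn.congr ?_ (fun x hx => (heq x hx).symm)
    exact (continuous_const.mul ((Gfun_continuous p _).comp
      (continuous_const.mul continuous_id))).continuousOn
  have hlamne : lam ≠ 0 := by
    intro h
    rw [h] at hR1
    simp at hR1
    linarith
  -- one-step bound
  have hstepb : ∀ n, ∀ x ∈ Set.Icc (0 : ℝ) 1,
      ‖fn (n + 1) x - fn n x‖ ≤ C * r ^ (n + 1) := by
    intro n x hx
    have h0 : 0 ≤ M ^ n * x := mul_nonneg (by positivity) hx.1
    have hkey := gcontract m p hp0 (fun q => hmul q) hdiff (M ^ n * x) h0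
    have heq : fn (n + 1) x - fn n x
        = (lam ^ (n + 1))⁻¹ * (gfun p (((m : ℝ) + 1) * (M ^ n * x))
            - lam * gfun p (M ^ n * x)) := by
      have harg : M ^ (n + 1) * x = ((m : ℝ) + 1) * (M ^ n * x) := by
        rw [hMdef, pow_succ]; ring
      simp only [hfndef]
      rw [harg, pow_succ, mul_inv]
      field_simp
    rw [heq, norm_mul, norm_inv, norm_pow]
    have hrr : (‖lam‖ ^ (n + 1))⁻¹ = r ^ (n + 1) := by
      rw [hrdef, inv_pow]
    rw [hrr]
    calc r ^ (n + 1) * ‖gfun p (((m : ℝ) + 1) * (M ^ n * x))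
          - lam * gfun p (M ^ n * x)‖
        ≤ r ^ (n + 1) * C := by
          apply mul_le_mul_of_nonneg_left _ (by positivity)
          rw [hCdef]; exact hkey
      _ = C * r ^ (n + 1) := by ring
  -- limit function
  obtain ⟨f, fcont, htail⟩ :=
    GenKochL.uniform_limit_exists fn C r hC0.le hr0 hr1 hcont hstepb
  set B : ℝ := C * r / (1 - r) with hBdef
  have hB0 : 0 ≤ B := div_nonneg (by positivity) h1r.le
  -- image identification
  have himg : ∀ n, (lam ^ n)⁻¹ • P n = fn n '' Set.Icc 0 1 := by
    intro n
    have hN1 : 1 ≤ (m + 1) ^ n := Nat.one_le_pow _ _ (by omega)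
    have hcast : (((m + 1) ^ n : ℕ) : ℝ) = M ^ n := by
      rw [hMdef]; push_cast; ring
    have h1 : P n = gfun p '' Set.Icc (0 : ℝ) (((m + 1) ^ n : ℕ) : ℝ) := by
      rw [hP n, gfun_image p _ hN1]
    have h2 : (fun x : ℝ => M ^ n * x) '' Set.Icc 0 1
        = Set.Icc (0 : ℝ) (((m + 1) ^ n : ℕ) : ℝ) := by
      rw [hcast]
      have hMn : (0 : ℝ) < M ^ n := by positivity
      ext y
      simp only [Set.mem_image, Set.mem_Icc]
      constructor
      · rintro ⟨x, ⟨hx0, hx1⟩, rfl⟩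
        exact ⟨mul_nonneg hMn.le hx0, by nlinarith⟩
      · rintro ⟨hy0, hy1⟩
        refine ⟨y / M ^ n, ⟨div_nonneg hy0 hMn.le, ?_⟩, ?_⟩
        · rw [div_le_one hMn]; exact hy1
        · field_simp
    calc (lam ^ n)⁻¹ • P n = (fun z => (lam ^ n)⁻¹ * z) '' P n := by
          rw [← Set.image_smul]
          rfl
      _ = (fun z => (lam ^ n)⁻¹ * z) ''
            (gfun p '' ((fun x : ℝ => M ^ n * x) '' Set.Icc 0 1)) := by
          rw [h1, h2]
      _ = fn n '' Set.Icc 0 1 := by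
          rw [Set.image_image, Set.image_image]
  set K : Set ℂ := f '' Set.Icc 0 1 with hKdef
  have h01 : (0 : ℝ) ∈ Set.Icc (0 : ℝ) 1 := by norm_num
  have hKne : K.Nonempty := ⟨f 0, Set.mem_image_of_mem f h01⟩
  have hKcomp : IsCompact K := isCompact_Icc.image_of_continuousOn fcont
  have hgeo : Tendsto (fun n => B * r ^ n) atTop (𝓝 0) := by
    have := tendsto_pow_atTop_nhds_zero_of_lt_one hr0.le hr1
    simpa using this.const_mul B
  -- Hausdorff convergence
  have hdistb : ∀ n, hausdorffDist ((lam ^ n)⁻¹ • P n) K ≤ B * r ^ n := by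
    intro n
    rw [himg n]
    apply hausdorffDist_le_of_mem_dist (mul_nonneg hB0 (by positivity))
    · rintro z ⟨x, hx, rfl⟩
      refine ⟨f x, Set.mem_image_of_mem f hx, ?_⟩
      rw [Complex.dist_eq, norm_sub_rev]
      exact htail n x hx
    · rintro z ⟨x, hx, rfl⟩
      refine ⟨fn n x, Set.mem_image_of_mem _ hx, ?_⟩
      rw [Complex.dist_eq]
      exact htail n x hx
  have hten : Tendsto (fun n => hausdorffDist ((lam ^ n)⁻¹ • P n) K) atTop (𝓝 0) :=
    squeeze_zero (fun n => hausdorffDist_nonneg) hdistb hgeo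
  refine ⟨K, hKne, hKcomp, hten, ?_, f, fcont, rfl⟩
  -- uniqueness
  intro K' hK'ne hK'c hK't
  have hAcomp : ∀ n, IsCompact ((lam ^ n)⁻¹ • P n) := fun n => by
    rw [himg n]
    exact isCompact_Icc.image_of_continuousOn (hcont n)
  have hAne : ∀ n, ((lam ^ n)⁻¹ • P n).Nonempty := fun n => by
    rw [himg n]
    exact ⟨fn n 0, Set.mem_image_of_mem _ h01⟩
  have htri : ∀ n, hausdorffDist K K'
      ≤ hausdorffDist ((lam ^ n)⁻¹ • P n) K + hausdorffDist ((lam ^ n)⁻¹ • P n) K' := by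
    intro n
    have fin : EMetric.hausdorffEdist K ((lam ^ n)⁻¹ • P n) ≠ ⊤ :=
      hausdorffEdist_ne_top_of_nonempty_of_bounded hKne (hAne n)
        hKcomp.isBounded (hAcomp n).isBounded
    calc hausdorffDist K K'
        ≤ hausdorffDist K ((lam ^ n)⁻¹ • P n) + hausdorffDist ((lam ^ n)⁻¹ • P n) K' :=
          hausdorffDist_triangle fin
      _ = hausdorffDist ((lam ^ n)⁻¹ • P n) K + hausdorffDist ((lam ^ n)⁻¹ • P n) K' := by
          rw [hausdorffDist_comm]
  have hsum : Tendsto (fun n => hausdorffDist ((lam ^ n)⁻¹ • P n) K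
      + hausdorffDist ((lam ^ n)⁻¹ • P n) K') atTop (𝓝 0) := by
    have := hten.add hK't
    simpa using this
  have h0le : hausdorffDist K K' ≤ 0 :=
    le_of_tendsto_of_tendsto tendsto_const_nhds hsum (Filter.Eventually.of_forall htri)
  have hzero : hausdorffDist K' K = 0 := by
    rw [hausdorffDist_comm]
    exact le_antisymm h0le hausdorffDist_nonneg
  have fin' : EMetric.hausdorffEdist K' K ≠ ⊤ :=
    hausdorffEdist_ne_top_of_nonempty_of_bounded hK'ne hKne hK'c.isBounded hKcomp.isBounded
  exact (hK'c.isClosed.hausdorffDist_zero_iff_eq hKcomp.isClosed fin').mp hzero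
end

section
/- Let m ≥ 1 be an integer, δ_1,…,δ_m ∈ {+1,−1}, and let δ be the (+1,δ_1,…,δ_m)-Thue–Morse sequence with |p(m+1)| > 1. Then the Hausdorff-metric limit K of the sets (p(m+1))^{−n}·P(n) is the unique nonempty compact subset of ℂ satisfying K = ⋃_{j=0}^m S_j(K), where S_j(z) = (p(j) + δ_j e^{2jπi/m} z)/p(m+1). -/
open Complex Filter Metric Set EMetric
open scoped Real Topology Pointwise NNReal ENNReal

lemma aux_isCompact_segment (x y : ℂ) : IsCompact (segment ℝ x y) := by
  rw [segment_eq_image]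
  exact isCompact_Icc.image (by continuity)

lemma aux_affine_segment (a e x y : ℂ) :
    (fun w => a + e * w) '' segment ℝ x y = segment ℝ (a + e * x) (a + e * y) := by
  rw [segment_eq_image, segment_eq_image, Set.image_image]
  apply Set.image_congr'
  intro θ
  simp only [Complex.real_smul]
  push_cast
  ring

lemma aux_infEdist_lip {f : ℂ → ℂ} {ρ : ℝ≥0} (hρ : ρ ≠ 0) (hf : LipschitzWith ρ f)
    (a : ℂ) (t : Set ℂ) :
    infEdist (f a) (f '' t) ≤ (ρ : ℝ≥0∞) * infEdist a t := by
  have h1 : (ρ : ℝ≥0∞) * infEdist a t = ⨅ b ∈ t, (ρ : ℝ≥0∞) * edist a b := by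
    rw [EMetric.infEdist, Metric.infEDist, ENNReal.mul_iInf_of_ne (by exact_mod_cast hρ) ENNReal.coe_ne_top]
    refine iInf_congr fun b => ?_
    rw [ENNReal.mul_iInf_of_ne (by exact_mod_cast hρ) ENNReal.coe_ne_top]
  rw [h1]
  refine le_iInf₂ fun b hb => ?_
  calc infEdist (f a) (f '' t) ≤ edist (f a) (f b) :=
        infEdist_le_edist_of_mem (Set.mem_image_of_mem f hb)
    _ ≤ (ρ : ℝ≥0∞) * edist a b := hf a b

lemma aux_hausdorffEdist_lip {f : ℂ → ℂ} {ρ : ℝ≥0} (hρ : ρ ≠ 0) (hf : LipschitzWith ρ f)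
    (A B : Set ℂ) :
    hausdorffEdist (f '' A) (f '' B) ≤ (ρ : ℝ≥0∞) * hausdorffEdist A B := by
  refine hausdorffEdist_le_of_infEdist ?_ ?_
  · rintro x ⟨a, ha, rfl⟩
    exact (aux_infEdist_lip hρ hf a B).trans
      (mul_le_mul_right (infEdist_le_hausdorffEdist_of_mem ha) _)
  · rintro x ⟨b, hb, rfl⟩
    refine (aux_infEdist_lip hρ hf b A).trans ?_
    rw [hausdorffEdist, hausdorffEDist_comm]
    exact mul_le_mul_right (infEdist_le_hausdorffEdist_of_mem hb) _

lemma aux_hausdorffEdist_biUnion (s : Finset ℕ) (u v : ℕ → Set ℂ) (r : ℝ≥0∞)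
    (h : ∀ j ∈ s, hausdorffEdist (u j) (v j) ≤ r) :
    hausdorffEdist (⋃ j ∈ s, u j) (⋃ j ∈ s, v j) ≤ r := by
  refine hausdorffEdist_le_of_infEdist ?_ ?_
  · rintro x hx
    simp only [Set.mem_iUnion, exists_prop] at hx
    obtain ⟨j, hj, hxj⟩ := hx
    calc infEdist x (⋃ j ∈ s, v j) ≤ infEdist x (v j) :=
          infEdist_anti (Set.subset_biUnion_of_mem hj)
      _ ≤ hausdorffEdist (u j) (v j) := infEdist_le_hausdorffEdist_of_mem hxj
      _ ≤ r := h j hj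
  · rintro x hx
    simp only [Set.mem_iUnion, exists_prop] at hx
    obtain ⟨j, hj, hxj⟩ := hx
    calc infEdist x (⋃ j ∈ s, u j) ≤ infEdist x (u j) :=
          infEdist_anti (Set.subset_biUnion_of_mem hj)
      _ ≤ hausdorffEdist (v j) (u j) := infEdist_le_hausdorffEdist_of_mem hxj
      _ = hausdorffEdist (u j) (v j) := hausdorffEdist_comm
      _ ≤ r := h j hj

/-- The Hausdorff-metric limit `K` of the rescaled polygonal paths is the unique
nonempty compact subset of `ℂ` satisfying `K = ⋃_{j=0}^m S_j(K)`, where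
`S_j(z) = (p(j) + δ_j e^{2jπi/m} z)/p(m+1)`. -/
theorem generalized_koch_curve_is_attractor
    (m : ℕ) (hm : 1 ≤ m)
    (δ : ℕ → ℝ) (hδ0 : δ 0 = 1)
    (hδpm : ∀ n, δ n = 1 ∨ δ n = -1)
    (hδrec : ∀ q k, k ≤ m → δ ((m + 1) * q + k) = δ q * δ k)
    (p : ℕ → ℂ)
    (hp : ∀ n, p n = ∑ k ∈ Finset.range n,
      (δ k : ℂ) * Complex.exp (2 * Real.pi * Complex.I * k / m))
    (P : ℕ → Set ℂ)
    (hP : ∀ n, P n = ⋃ k ∈ Finset.Icc 1 ((m + 1) ^ n), segment ℝ (p (k - 1)) (p k))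
    (hbig : 1 < ‖p (m + 1)‖)
    (S : ℕ → ℂ → ℂ)
    (hS : ∀ j z, S j z = (p j + (δ j : ℂ) * Complex.exp (2 * Real.pi * Complex.I * j / m) * z)
      / p (m + 1))
    (K : Set ℂ) (hKne : K.Nonempty) (hKc : IsCompact K)
    (hKlim : Tendsto (fun n => hausdorffDist (((p (m + 1)) ^ n)⁻¹ • P n) K) atTop (𝓝 0)) :
    K = (⋃ j ∈ Finset.range (m + 1), S j '' K) ∧
      ∀ K' : Set ℂ, K'.Nonempty → IsCompact K' →
        K' = (⋃ j ∈ Finset.range (m + 1), S j '' K') → K' = K := by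
  -- notation
  set c : ℂ := p (m + 1) with hc
  set ε : ℕ → ℂ := fun k => (δ k : ℂ) * Complex.exp (2 * Real.pi * Complex.I * k / m)
    with hε
  have hmC : (m : ℂ) ≠ 0 := Nat.cast_ne_zero.mpr (by omega)
  have hc0 : c ≠ 0 := by
    intro h
    rw [h] at hbig
    simp at hbig
    linarith
  -- basic facts about p and ε
  have hp0 : p 0 = 0 := by rw [hp]; simp
  have hpsucc : ∀ k, p (k + 1) = p k + ε k := by
    intro k
    rw [hp, hp, Finset.sum_range_succ]
  -- exponential is m-periodic in the numerator
  have hEper : ∀ a b : ℕ,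
      Complex.exp (2 * Real.pi * Complex.I * (↑(a + m * b)) / m)
        = Complex.exp (2 * Real.pi * Complex.I * a / m) := by
    intro a b
    have : (2 * Real.pi * Complex.I * (↑(a + m * b)) / m : ℂ)
        = 2 * Real.pi * Complex.I * a / m + (b : ℂ) * (2 * Real.pi * Complex.I) := by
      push_cast
      field_simp
    rw [this, Complex.exp_add, Complex.exp_nat_mul, Complex.exp_two_pi_mul_I, one_pow, mul_one]
  -- geometric sum: (m+1)^n = m * t + 1
  have hgeo : ∀ n : ℕ, ∃ t, (m + 1) ^ n = m * t + 1 := by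
    intro n
    induction n with
    | zero => exact ⟨0, by simp⟩
    | succ n ih =>
      obtain ⟨t, ht⟩ := ih
      exact ⟨t * (m + 1) + 1, by rw [pow_succ, ht]; ring⟩
  -- δ is multiplicative over base-(m+1) digits
  have hδdigit : ∀ n j r, r < (m + 1) ^ n → δ ((m + 1) ^ n * j + r) = δ j * δ r := by
    intro n
    induction n with
    | zero =>
      intro j r hr
      rw [pow_zero] at hr
      obtain rfl : r = 0 := by omega
      simp [hδ0]
    | succ n ih =>
      intro j r hr
      have hk : r % (m + 1) ≤ m := by
        have := Nat.mod_lt r (show 0 < m + 1 by omega)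
        omega
      have hr' : r / (m + 1) < (m + 1) ^ n := by
        rw [Nat.div_lt_iff_lt_mul (by omega)]
        calc r < (m + 1) ^ (n + 1) := hr
          _ = (m + 1) ^ n * (m + 1) := pow_succ _ _
      have heq : (m + 1) ^ (n + 1) * j + r
          = (m + 1) * ((m + 1) ^ n * j + r / (m + 1)) + r % (m + 1) := by
        conv_lhs => rw [← Nat.div_add_mod r (m + 1)]
        rw [pow_succ]
        ring
      have hrk : δ r = δ (r / (m + 1)) * δ (r % (m + 1)) := by
        conv_lhs => rw [← Nat.div_add_mod r (m + 1)]
        exact hδrec _ _ hk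
      rw [heq, hδrec _ _ hk, ih j _ hr', hrk]
      ring
  -- ε is multiplicative over blocks
  have hεmul : ∀ n j r, r < (m + 1) ^ n → ε ((m + 1) ^ n * j + r) = ε j * ε r := by
    intro n j r hr
    obtain ⟨t, ht⟩ := hgeo n
    have hidx : (m + 1) ^ n * j + r = (j + r) + m * (t * j) := by
      rw [ht]; ring
    have hexp : Complex.exp (2 * Real.pi * Complex.I * ((m + 1) ^ n * j + r : ℕ) / m)
        = Complex.exp (2 * Real.pi * Complex.I * (j + r : ℕ) / m) := by
      rw [hidx]
      exact hEper (j + r) (t * j)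
    have hexp2 : Complex.exp (2 * Real.pi * Complex.I * (j + r : ℕ) / m)
        = Complex.exp (2 * Real.pi * Complex.I * j / m)
          * Complex.exp (2 * Real.pi * Complex.I * r / m) := by
      rw [← Complex.exp_add]
      congr 1
      push_cast
      field_simp
    simp only [hε]
    rw [hδdigit n j r hr, hexp, hexp2]
    push_cast
    ring
  -- partial sums over blocks
  have hpC : ∀ n j r, r ≤ (m + 1) ^ n →
      p ((m + 1) ^ n * j + r) = p ((m + 1) ^ n * j) + ε j * p r := by
    intro n j r
    induction r with
    | zero => intro _; simp [hp0]
    | succ r ih =>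
      intro hr
      have hr' : r < (m + 1) ^ n := by omega
      have : (m + 1) ^ n * j + (r + 1) = ((m + 1) ^ n * j + r) + 1 := by ring
      rw [this, hpsucc, ih (by omega), hεmul n j r hr', hpsucc]
      ring
  have hmul1 : ∀ j, p ((m + 1) * j) = c * p j := by
    intro j
    induction j with
    | zero => simp [hp0]
    | succ j ih =>
      have h1 : (m + 1) * (j + 1) = (m + 1) ^ 1 * j + (m + 1) := by ring
      have h2 := hpC 1 j (m + 1) (by rw [pow_one])
      rw [h1, h2, pow_one, ih, ← hc, hpsucc j]
      ring
  have hpow : ∀ n j, p ((m + 1) ^ n * j) = c ^ n * p j := by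
    intro n
    induction n with
    | zero => intro j; simp
    | succ n ih =>
      intro j
      have h1 : (m + 1) ^ (n + 1) * j = (m + 1) ^ n * ((m + 1) * j) := by rw [pow_succ]; ring
      rw [h1, ih, hmul1, pow_succ]
      ring
  have hkey : ∀ n j r, r ≤ (m + 1) ^ n →
      p ((m + 1) ^ n * j + r) = c ^ n * p j + ε j * p r := by
    intro n j r hr
    rw [hpC n j r hr, hpow]
  -- decomposition of P (n+1)
  have hPdec : ∀ n, P (n + 1)
      = ⋃ j ∈ Finset.range (m + 1), (fun w => c ^ n * p j + ε j * w) '' P n := by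
    intro n
    have hps : (m + 1) ^ (n + 1) = (m + 1) ^ n * (m + 1) := pow_succ _ _
    have hpow_pos : 0 < (m + 1) ^ n := Nat.pow_pos (by omega)
    rw [hP, hP]
    ext z
    simp only [Set.mem_iUnion, Finset.mem_Icc, Finset.mem_range, Set.mem_image, exists_prop]
    constructor
    · rintro ⟨k, ⟨hk1, hk2⟩, hz⟩
      have hps' : (m + 1) ^ (n + 1) = (m + 1) * (m + 1) ^ n := by rw [pow_succ]; ring
      obtain ⟨j, r0, hjm, hmod, hdm⟩ : ∃ j r0, j < m + 1 ∧ r0 < (m + 1) ^ n ∧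
          k - 1 = (m + 1) ^ n * j + r0 := by
        refine ⟨(k - 1) / (m + 1) ^ n, (k - 1) % (m + 1) ^ n, ?_,
          Nat.mod_lt _ hpow_pos, (Nat.div_add_mod _ _).symm⟩
        rw [Nat.div_lt_iff_lt_mul hpow_pos]
        omega
      have hkk : k = (m + 1) ^ n * j + (r0 + 1) := by omega
      rw [hdm, hkk, hkey n j r0 (by omega), hkey n j (r0 + 1) (by omega),
        ← aux_affine_segment] at hz
      obtain ⟨w, hw, rfl⟩ := hz
      refine ⟨j, hjm, w, ⟨r0 + 1, ⟨by omega, by omega⟩, ?_⟩, rfl⟩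
      simpa using hw
    · rintro ⟨j, hj, w, ⟨r, ⟨hr1, hr2⟩, hw⟩, rfl⟩
      have hle : (m + 1) ^ n * j ≤ (m + 1) ^ n * m := Nat.mul_le_mul_left _ (by omega)
      have hps2 : (m + 1) ^ (n + 1) = (m + 1) ^ n * m + (m + 1) ^ n := by rw [pow_succ]; ring
      refine ⟨(m + 1) ^ n * j + r, ⟨by omega, by omega⟩, ?_⟩
      have h1 : (m + 1) ^ n * j + r - 1 = (m + 1) ^ n * j + (r - 1) := by omega
      rw [h1, hkey n j (r - 1) (by omega), hkey n j r hr2, ← aux_affine_segment]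
      exact Set.mem_image_of_mem _ hw
  -- ε has modulus 1
  have habsε : ∀ j, ‖ε j‖ = 1 := by
    intro j
    have h1 : (2 * Real.pi * Complex.I * j / m : ℂ)
        = ((2 * Real.pi * j / m : ℝ) : ℂ) * Complex.I := by push_cast; ring
    simp only [hε]
    rw [norm_mul, h1, Complex.norm_exp_ofReal_mul_I, mul_one, Complex.norm_real]
    rcases hδpm j with h | h <;> rw [h] <;> norm_num
  -- similarity ratio
  set ρ : ℝ≥0 := ‖c‖₊⁻¹ with hρdef
  have hcnorm : 1 < ‖c‖ := by exact hbig
  have hρ0 : ρ ≠ 0 := inv_ne_zero (nnnorm_ne_zero_iff.mpr hc0)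
  have hρreal : (ρ : ℝ) = ‖c‖⁻¹ := by simp [hρdef]
  have hρlt1 : (ρ : ℝ) < 1 := by
    rw [hρreal]
    exact inv_lt_one_of_one_lt₀ hcnorm
  have hLip : ∀ j, LipschitzWith ρ (S j) := by
    intro j
    refine LipschitzWith.of_dist_le_mul fun x y => ?_
    have hnum : (p j + (δ j : ℂ) * Complex.exp (2 * Real.pi * Complex.I * j / m) * x)
        - (p j + (δ j : ℂ) * Complex.exp (2 * Real.pi * Complex.I * j / m) * y)
        = ε j * (x - y) := by simp only [hε]; ring
    rw [Complex.dist_eq, Complex.dist_eq, hS, hS, div_sub_div_same, hnum, norm_div, norm_mul,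
      habsε, one_mul]
    have hcoe : (ρ : ℝ) = ‖c‖⁻¹ := by rw [hρreal]
    rw [hcoe, div_eq_inv_mul]
  -- the Hutchinson operator
  set T : Set ℂ → Set ℂ := fun A => ⋃ j ∈ Finset.range (m + 1), S j '' A with hT
  have hQT : ∀ n, T ((c ^ n)⁻¹ • P n) = (c ^ (n + 1))⁻¹ • P (n + 1) := by
    intro n
    have halg : ∀ (j : ℕ) (w : ℂ),
        S j ((c ^ n)⁻¹ * w) = (c ^ (n + 1))⁻¹ * (c ^ n * p j + ε j * w) := by
      intro j w
      rw [hS]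
      simp only [hε]
      have hcn : c ^ n ≠ 0 := pow_ne_zero _ hc0
      field_simp
      ring
    rw [hPdec n]
    simp only [hT]
    ext z
    simp only [Set.mem_iUnion, Set.mem_image, Set.mem_smul_set, exists_prop, smul_eq_mul]
    constructor
    · rintro ⟨j, hj, x, ⟨w, hw, rfl⟩, rfl⟩
      exact ⟨c ^ n * p j + ε j * w, ⟨j, hj, w, hw, rfl⟩, (halg j w).symm⟩
    · rintro ⟨u, ⟨j, hj, w, hw, rfl⟩, rfl⟩
      exact ⟨j, hj, (c ^ n)⁻¹ * w, ⟨w, hw, rfl⟩, halg j w⟩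
  -- compactness and nonemptiness
  have hPcomp : ∀ n, IsCompact (P n) := by
    intro n
    rw [hP]
    exact (Finset.Icc 1 ((m + 1) ^ n)).finite_toSet.isCompact_biUnion
      fun k _ => aux_isCompact_segment _ _
  have hPne : ∀ n, (P n).Nonempty := by
    intro n
    rw [hP]
    refine ⟨p 0, Set.mem_iUnion.mpr ⟨1, Set.mem_iUnion.mpr ⟨?_, ?_⟩⟩⟩
    · exact Finset.mem_Icc.mpr ⟨le_refl 1, Nat.one_le_pow _ _ (by omega)⟩
    · exact left_mem_segment ℝ (p 0) (p 1)
  have hQcomp : ∀ n, IsCompact ((c ^ n)⁻¹ • P n) := by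
    intro n
    have : (c ^ n)⁻¹ • P n = (fun z : ℂ => (c ^ n)⁻¹ • z) '' P n := rfl
    rw [this]
    exact (hPcomp n).image (continuous_const_smul _)
  have hQne : ∀ n, ((c ^ n)⁻¹ • P n).Nonempty := fun n => (hPne n).smul_set
  have hTcomp : ∀ A : Set ℂ, IsCompact A → IsCompact (T A) := by
    intro A hA
    exact (Finset.range (m + 1)).finite_toSet.isCompact_biUnion
      fun j _ => hA.image (hLip j).continuous
  have hTne : ∀ A : Set ℂ, A.Nonempty → (T A).Nonempty := by
    rintro A ⟨a, ha⟩
    exact ⟨S 0 a, Set.mem_iUnion.mpr ⟨0, Set.mem_iUnion.mpr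
      ⟨by simp, Set.mem_image_of_mem _ ha⟩⟩⟩
  have hfin : ∀ A B : Set ℂ, A.Nonempty → B.Nonempty → IsCompact A → IsCompact B →
      hausdorffEdist A B ≠ ⊤ := fun A B hA hB hcA hcB =>
    hausdorffEdist_ne_top_of_nonempty_of_bounded hA hB hcA.isBounded hcB.isBounded
  -- contraction property of T
  have hTcon : ∀ A B : Set ℂ,
      hausdorffEdist (T A) (T B) ≤ (ρ : ℝ≥0∞) * hausdorffEdist A B := fun A B =>
    aux_hausdorffEdist_biUnion _ _ _ _ fun j _ => aux_hausdorffEdist_lip hρ0 (hLip j) A B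
  have hTcon' : ∀ A B : Set ℂ, hausdorffEdist A B ≠ ⊤ →
      hausdorffDist (T A) (T B) ≤ ρ * hausdorffDist A B := by
    intro A B hAB
    have h2 : ((ρ : ℝ≥0∞) * hausdorffEdist A B).toReal = ρ * hausdorffDist A B := by
      simp [hausdorffDist, hausdorffEdist, ENNReal.toReal_mul]
    calc hausdorffDist (T A) (T B) = (hausdorffEdist (T A) (T B)).toReal := rfl
      _ ≤ ((ρ : ℝ≥0∞) * hausdorffEdist A B).toReal :=
          ENNReal.toReal_mono (ENNReal.mul_ne_top ENNReal.coe_ne_top hAB) (hTcon A B)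
      _ = ρ * hausdorffDist A B := h2
  -- sets at Hausdorff distance 0 coincide
  have heq0 : ∀ A B : Set ℂ, A.Nonempty → B.Nonempty → IsCompact A → IsCompact B →
      hausdorffDist A B ≤ 0 → A = B := by
    intro A B hA hB hcA hcB hd
    exact (hcA.isClosed.hausdorffDist_zero_iff_eq hcB.isClosed
      (hfin A B hA hB hcA hcB)).mp (le_antisymm hd hausdorffDist_nonneg)
  have hQlim : Tendsto (fun n => hausdorffDist ((c ^ n)⁻¹ • P n) K) atTop (𝓝 0) := hKlim
  -- K is a fixed point of T
  have hmain : K = T K := by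
    have hTKne := hTne K hKne
    have hTKc := hTcomp K hKc
    have h1 : ∀ n : ℕ, hausdorffDist K (T K) ≤
        hausdorffDist K ((c ^ (n + 1))⁻¹ • P (n + 1))
          + ρ * hausdorffDist ((c ^ n)⁻¹ • P n) K := by
      intro n
      have t1 : hausdorffDist K (T K) ≤ hausdorffDist K ((c ^ (n + 1))⁻¹ • P (n + 1))
          + hausdorffDist ((c ^ (n + 1))⁻¹ • P (n + 1)) (T K) :=
        hausdorffDist_triangle (hfin _ _ hKne (hQne _) hKc (hQcomp _))
      have t2 : hausdorffDist ((c ^ (n + 1))⁻¹ • P (n + 1)) (T K)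
          ≤ ρ * hausdorffDist ((c ^ n)⁻¹ • P n) K := by
        rw [← hQT n]
        exact hTcon' _ _ (hfin _ _ (hQne n) hKne (hQcomp n) hKc)
      linarith
    have h2 : Tendsto (fun n : ℕ => hausdorffDist K ((c ^ (n + 1))⁻¹ • P (n + 1))
        + ρ * hausdorffDist ((c ^ n)⁻¹ • P n) K) atTop (𝓝 0) := by
      have ha : Tendsto (fun n : ℕ => hausdorffDist K ((c ^ (n + 1))⁻¹ • P (n + 1)))
          atTop (𝓝 0) := by
        have := hQlim.comp (tendsto_add_atTop_nat 1)
        simpa [Function.comp_def, hausdorffDist_comm] using this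
      have hb : Tendsto (fun n : ℕ => (ρ : ℝ) * hausdorffDist ((c ^ n)⁻¹ • P n) K)
          atTop (𝓝 0) := by
        simpa using hQlim.const_mul (ρ : ℝ)
      simpa using ha.add hb
    exact heq0 K (T K) hKne hTKne hKc hTKc (ge_of_tendsto' h2 h1)
  refine ⟨hmain, ?_⟩
  intro K' hne' hcomp' hfix
  have hfix' : K' = T K' := hfix
  have hd := hTcon' K' K (hfin _ _ hne' hKne hcomp' hKc)
  rw [← hfix', ← hmain] at hd
  have hd0 : (0 : ℝ) ≤ hausdorffDist K' K := hausdorffDist_nonneg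
  have : hausdorffDist K' K ≤ 0 := by nlinarith
  exact heq0 K' K hne' hKne hcomp' hKc this
end

section
/- Let m ≥ 2 be an integer and let δ be the (+1,δ_1,…,δ_m)-Thue–Morse sequence with δ_k = +1 for 0 ≤ k ≤ ⌊m/4⌋, δ_k = −1 for ⌊m/4⌋+1 ≤ k ≤ m−⌊m/4⌋−1, and δ_k = +1 for m−⌊m/4⌋ ≤ k ≤ m. Then p(m+1) = Σ_{k=0}^m δ_k e^{2kπi/m} is a real number and 3 ≤ p(m+1) ≤ m+1. -/
open Complex Filter Metric Set
open scoped Real Topology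

/-- For the sign pattern `δ_k = +1` for `0 ≤ k ≤ ⌊m/4⌋`, `δ_k = −1` for
`⌊m/4⌋+1 ≤ k ≤ m−⌊m/4⌋−1`, `δ_k = +1` for `m−⌊m/4⌋ ≤ k ≤ m`, the number
`p(m+1) = Σ_{k=0}^m δ_k e^{2kπi/m}` is real and `3 ≤ p(m+1) ≤ m+1`. -/
theorem p_succ_m_real_and_between_three_and_m_add_one
    (m : ℕ) (hm : 2 ≤ m)
    (δ : ℕ → ℝ)
    (hδ1 : ∀ k, k ≤ m / 4 → δ k = 1)
    (hδ2 : ∀ k, m / 4 + 1 ≤ k → k ≤ m - m / 4 - 1 → δ k = -1)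
    (hδ3 : ∀ k, m - m / 4 ≤ k → k ≤ m → δ k = 1)
    (hδpm : ∀ n, δ n = 1 ∨ δ n = -1)
    (hδrec : ∀ q k, k ≤ m → δ ((m + 1) * q + k) = δ q * δ k)
    (p : ℕ → ℂ)
    (hp : ∀ n, p n = ∑ k ∈ Finset.range n,
      (δ k : ℂ) * Complex.exp (2 * Real.pi * Complex.I * k / m)) :
    (p (m + 1)).im = 0 ∧ 3 ≤ (p (m + 1)).re ∧ (p (m + 1)).re ≤ m + 1 := by
  have hmpos : (0:ℝ) < m := by exact_mod_cast (by omega : 0 < m)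
  have hm0 : (m:ℝ) ≠ 0 := ne_of_gt hmpos
  have hmC : (m:ℂ) ≠ 0 := Nat.cast_ne_zero.2 (by omega)
  set j := m / 4 with hjdef
  have h4j : 4 * j ≤ m := by omega
  set c : ℕ → ℝ := fun k => Real.cos (2 * Real.pi * k / m) with hc
  set s : ℕ → ℝ := fun k => Real.sin (2 * Real.pi * k / m) with hs
  have hexp : ∀ k : ℕ, (2 * (Real.pi:ℂ) * Complex.I * k / m)
      = ((2 * Real.pi * k / m : ℝ) : ℂ) * Complex.I := by
    intro k; push_cast; ring
  have hmulre : ∀ (r x : ℝ), ((r:ℂ) * Complex.exp ((x:ℂ) * Complex.I)).re = r * Real.cos x := by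
    intro r x
    rw [Complex.mul_re, Complex.exp_ofReal_mul_I_re, Complex.exp_ofReal_mul_I_im]
    simp
  have hmulim : ∀ (r x : ℝ), ((r:ℂ) * Complex.exp ((x:ℂ) * Complex.I)).im = r * Real.sin x := by
    intro r x
    rw [Complex.mul_im, Complex.exp_ofReal_mul_I_re, Complex.exp_ofReal_mul_I_im]
    simp
  have hre : (p (m+1)).re = ∑ k ∈ Finset.range (m+1), δ k * c k := by
    rw [hp, Complex.re_sum]
    refine Finset.sum_congr rfl fun k _ => ?_
    rw [hexp k, hmulre]
  have him : (p (m+1)).im = ∑ k ∈ Finset.range (m+1), δ k * s k := by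
    rw [hp, Complex.im_sum]
    refine Finset.sum_congr rfl fun k _ => ?_
    rw [hexp k, hmulim]
  -- angle symmetry
  have hangle : ∀ k, k ≤ m → 2*Real.pi*((m-k:ℕ):ℝ)/m = 2*Real.pi - 2*Real.pi*k/m := by
    intro k hk
    rw [Nat.cast_sub hk]
    field_simp
  have hcsym : ∀ k, k ≤ m → c (m - k) = c k := by
    intro k hk
    simp only [hc, hangle k hk, Real.cos_sub, Real.cos_two_pi, Real.sin_two_pi]
    ring
  have hssym : ∀ k, k ≤ m → s (m - k) = - s k := by
    intro k hk
    simp only [hs, hangle k hk, Real.sin_sub, Real.cos_two_pi, Real.sin_two_pi]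
    ring
  have hδsym : ∀ k, k ≤ m → δ (m - k) = δ k := by
    intro k hk
    rcases le_or_gt k j with h1 | h1
    · rw [hδ1 k h1, hδ3 (m - k) (by omega) (by omega)]
    · rcases le_or_gt k (m - j - 1) with h2 | h2
      · rw [hδ2 k (by omega) h2, hδ2 (m - k) (by omega) (by omega)]
      · rw [hδ3 k (by omega) hk, hδ1 (m - k) (by omega)]
  -- imaginary part vanishes
  have him0 : (p (m+1)).im = 0 := by
    rw [him]
    have hrefl : ∑ k ∈ Finset.range (m+1), δ k * s k
        = ∑ k ∈ Finset.range (m+1), δ (m - k) * s (m - k) := by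
      rw [← Finset.sum_range_reflect (fun k => δ (m - k) * s (m - k)) (m+1)]
      refine Finset.sum_congr rfl fun k hk => ?_
      have hk' : k ≤ m := by simpa [Nat.lt_succ_iff] using hk
      congr 2 <;> omega
    have hzero : ∑ k ∈ Finset.range (m+1), (δ k * s k + δ (m - k) * s (m - k)) = 0 := by
      refine Finset.sum_eq_zero fun k hk => ?_
      have hk' : k ≤ m := by simpa [Nat.lt_succ_iff] using hk
      rw [hδsym k hk', hssym k hk']
      ring
    rw [Finset.sum_add_distrib, ← hrefl] at hzero
    linarith
  -- values of c at 0 and m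
  have hc0 : c 0 = 1 := by simp [hc]
  have hcm : c m = 1 := by
    have : 2 * Real.pi * (m:ℝ) / m = 2 * Real.pi := by field_simp
    simp [hc, this, Real.cos_two_pi]
  -- the geometric sum of m-th roots of unity vanishes
  have hz1 : Complex.exp (2 * (Real.pi:ℂ) * Complex.I / m) ≠ 1 := by
    intro h
    rw [Complex.exp_eq_one_iff] at h
    obtain ⟨n, hn⟩ := h
    have hne : (2 * (Real.pi:ℂ) * Complex.I) ≠ 0 :=
      mul_ne_zero (mul_ne_zero two_ne_zero (Complex.ofReal_ne_zero.2 Real.pi_ne_zero))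
        Complex.I_ne_zero
    have h2 : (2*(Real.pi:ℂ)*Complex.I) * (1/m) = (2*(Real.pi:ℂ)*Complex.I) * n := by
      rw [mul_one_div, hn]; ring
    have h3 : (1:ℂ)/m = n := mul_left_cancel₀ hne h2
    rw [div_eq_iff hmC] at h3
    have : ((1:ℤ) : ℂ) = ((n * (m:ℤ) : ℤ) : ℂ) := by push_cast; exact_mod_cast h3
    have : (1:ℤ) = n * (m:ℤ) := by exact_mod_cast this
    have : (n * (m:ℤ) : ℤ) = 1 := this.symm
    have hm' : (2:ℤ) ≤ m := by exact_mod_cast hm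
    rcases le_or_gt n 0 with h | h
    · nlinarith
    · nlinarith
  have hgeom : ∑ k ∈ Finset.range m, Complex.exp (2 * (Real.pi:ℂ) * Complex.I * k / m) = 0 := by
    have hterm : ∀ k : ℕ, Complex.exp (2 * (Real.pi:ℂ) * Complex.I * k / m)
        = (Complex.exp (2 * (Real.pi:ℂ) * Complex.I / m)) ^ k := by
      intro k
      rw [← Complex.exp_nat_mul]
      congr 1
      ring
    rw [Finset.sum_congr rfl fun k _ => hterm k, geom_sum_eq hz1]
    have hpow : (Complex.exp (2 * (Real.pi:ℂ) * Complex.I / m)) ^ m = 1 := by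
      rw [← Complex.exp_nat_mul]
      have : (m:ℂ) * (2 * (Real.pi:ℂ) * Complex.I / m) = 2 * Real.pi * Complex.I := by
        field_simp [hmC]
      rw [this, Complex.exp_two_pi_mul_I]
    rw [hpow]
    simp
  have hA : ∑ k ∈ Finset.range m, c k = 0 := by
    have h1 : ∑ k ∈ Finset.range m, c k
        = (∑ k ∈ Finset.range m, Complex.exp (2 * (Real.pi:ℂ) * Complex.I * k / m)).re := by
      rw [Complex.re_sum]
      exact Finset.sum_congr rfl fun k _ => by rw [hexp k, Complex.exp_ofReal_mul_I_re]
    rw [h1, hgeom, Complex.zero_re]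
  -- reflection for sums of c
  set T := ∑ k ∈ Finset.Ico 1 (j+1), c k with hT
  have hreflc : ∑ k ∈ Finset.Ico (m-j) m, c k = T := by
    rw [hT]
    refine (Finset.sum_nbij' (fun k => m - k) (fun k => m - k) ?_ ?_ ?_ ?_ ?_).symm
    · intro a ha; simp only [Finset.mem_Ico] at *; omega
    · intro a ha; simp only [Finset.mem_Ico] at *; omega
    · intro a ha; simp only [Finset.mem_Ico] at ha; omega
    · intro a ha; simp only [Finset.mem_Ico] at ha; omega
    · intro a ha
      simp only [Finset.mem_Ico] at ha
      exact (hcsym a (by omega)).symm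
  -- split the cosine sum
  have hj1m : j + 1 ≤ m - j := by omega
  have hsplitA : (∑ k ∈ Finset.Ico 0 (j+1), c k) + ((∑ k ∈ Finset.Ico (j+1) (m-j), c k)
      + ∑ k ∈ Finset.Ico (m-j) m, c k) = 0 := by
    rw [Finset.sum_Ico_consecutive c hj1m (by omega),
        Finset.sum_Ico_consecutive c (by omega) (by omega)]
    rw [← Finset.range_eq_Ico] at *
    exact hA
  have hseg1 : ∑ k ∈ Finset.Ico 0 (j+1), c k = 1 + T := by
    rw [Finset.sum_eq_sum_Ico_succ_bot (by omega) c, hc0, hT]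
  have hM : ∑ k ∈ Finset.Ico (j+1) (m-j), c k = -1 - 2*T := by
    rw [hseg1, hreflc] at hsplitA
    linarith
  -- real part identity
  have hre3 : (p (m+1)).re = 3 + 4*T := by
    rw [hre]
    rw [Finset.range_eq_Ico,
        ← Finset.sum_Ico_consecutive (fun k => δ k * c k) (by omega : 0 ≤ m-j) (by omega : m-j ≤ m+1),
        ← Finset.sum_Ico_consecutive (fun k => δ k * c k) (by omega : 0 ≤ j+1) (by omega : j+1 ≤ m-j)]
    have e1 : ∑ k ∈ Finset.Ico 0 (j+1), δ k * c k = 1 + T := by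
      rw [← hseg1]
      refine Finset.sum_congr rfl fun k hk => ?_
      simp only [Finset.mem_Ico] at hk
      rw [hδ1 k (by omega), one_mul]
    have e2 : ∑ k ∈ Finset.Ico (j+1) (m-j), δ k * c k = 1 + 2*T := by
      have : ∑ k ∈ Finset.Ico (j+1) (m-j), δ k * c k = -∑ k ∈ Finset.Ico (j+1) (m-j), c k := by
        rw [← Finset.sum_neg_distrib]
        refine Finset.sum_congr rfl fun k hk => ?_
        simp only [Finset.mem_Ico] at hk
        rw [hδ2 k (by omega) (by omega)]
        ring
      rw [this, hM]; ring
    have e3 : ∑ k ∈ Finset.Ico (m-j) (m+1), δ k * c k = T + 1 := by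
      rw [Finset.sum_Ico_succ_top (by omega : m - j ≤ m)]
      have : ∑ k ∈ Finset.Ico (m-j) m, δ k * c k = ∑ k ∈ Finset.Ico (m-j) m, c k := by
        refine Finset.sum_congr rfl fun k hk => ?_
        simp only [Finset.mem_Ico] at hk
        rw [hδ3 k (by omega) (by omega), one_mul]
      rw [this, hreflc, hδ3 m (by omega) le_rfl, hcm]
      ring
    simp only [e1, e2, e3]; ring
  have hTnonneg : 0 ≤ T := by
    rw [hT]
    refine Finset.sum_nonneg fun k hk => ?_
    simp only [Finset.mem_Ico] at hk
    have h4k : (4*k:ℝ) ≤ m := by exact_mod_cast (by omega : 4*k ≤ m)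
    have hk0 : (0:ℝ) ≤ k := Nat.cast_nonneg k
    refine Real.cos_nonneg_of_mem_Icc ⟨?_, ?_⟩
    · have : (0:ℝ) ≤ 2 * Real.pi * k / m := by positivity
      linarith [Real.pi_pos]
    · rw [div_le_iff₀ hmpos]
      nlinarith [Real.pi_pos]
  -- upper bound via triangle inequality
  have hub : (p (m+1)).re ≤ m + 1 := by
    have h1 : (p (m+1)).re ≤ ‖p (m+1)‖ := Complex.re_le_norm _
    have h2 : ‖p (m+1)‖ ≤ m + 1 := by
      rw [hp]
      refine le_trans (norm_sum_le _ _) ?_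
      have : ∀ k ∈ Finset.range (m+1),
          ‖(δ k : ℂ) * Complex.exp (2 * Real.pi * Complex.I * k / m)‖ = 1 := by
        intro k _
        rw [norm_mul, hexp k, Complex.norm_exp_ofReal_mul_I]
        rcases hδpm k with h | h <;> simp [h]
      rw [Finset.sum_congr rfl this]
      simp
    linarith
  exact ⟨him0, by rw [hre3]; linarith, hub⟩
end

section
/- Let m ≥ 1 be an integer, δ_1,…,δ_m ∈ {+1,−1}, and let δ be the (+1,δ_1,…,δ_m)-Thue–Morse sequence. Then for every j ∈ {1,2,…,m} and every n ∈ ℕ, p(j·(m+1)^n) = (p(m+1))^n · p(j). -/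
open Complex
open scoped Real

/-- For the `(+1,δ_1,…,δ_m)`-Thue–Morse sequence, for every `1 ≤ j ≤ m` and
every `n ∈ ℕ`, one has `p(j·(m+1)^n) = (p(m+1))^n · p(j)`. -/
theorem p_self_similarity
    (m : ℕ) (hm : 1 ≤ m)
    (δ : ℕ → ℝ) (hδ0 : δ 0 = 1)
    (hδpm : ∀ n, δ n = 1 ∨ δ n = -1)
    (hδrec : ∀ q k, k ≤ m → δ ((m + 1) * q + k) = δ q * δ k)
    (p : ℕ → ℂ)
    (hp : ∀ n, p n = ∑ k ∈ Finset.range n,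
      (δ k : ℂ) * Complex.exp (2 * Real.pi * Complex.I * k / m)) :
    ∀ j, 1 ≤ j → j ≤ m → ∀ n : ℕ, p (j * (m + 1) ^ n) = (p (m + 1)) ^ n * p j := by
  have hmC : (m : ℂ) ≠ 0 := Nat.cast_ne_zero.mpr (by omega)
  have hEmul : ∀ N k : ℕ,
      Complex.exp (2 * Real.pi * Complex.I * ((m + 1) * N + k : ℕ) / m)
        = Complex.exp (2 * Real.pi * Complex.I * N / m)
          * Complex.exp (2 * Real.pi * Complex.I * k / m) := by
    intro N k
    have harg : (2 * (Real.pi : ℂ) * Complex.I * ((m + 1) * N + k : ℕ) / m)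
        = ((N : ℤ) : ℂ) * (2 * Real.pi * Complex.I)
          + (2 * Real.pi * Complex.I * N / m + 2 * Real.pi * Complex.I * k / m) := by
      push_cast
      field_simp
      ring
    rw [harg, Complex.exp_add, Complex.exp_add, Complex.exp_int_mul_two_pi_mul_I, one_mul]
  have key : ∀ N, p ((m + 1) * N) = p (m + 1) * p N := by
    intro N
    induction N with
    | zero => simp [hp]
    | succ N ih =>
      have h1 : (m + 1) * (N + 1) = (m + 1) * N + (m + 1) := by ring
      rw [h1, hp, Finset.sum_range_add, ← hp, ih]
      have h2 : ∑ k ∈ Finset.range (m + 1),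
          (δ ((m + 1) * N + k) : ℂ)
            * Complex.exp (2 * Real.pi * Complex.I * ((m + 1) * N + k : ℕ) / m)
          = (δ N : ℂ) * Complex.exp (2 * Real.pi * Complex.I * N / m) * p (m + 1) := by
        rw [hp (m + 1), Finset.mul_sum]
        refine Finset.sum_congr rfl fun k hk => ?_
        rw [hδrec N k (Nat.lt_succ_iff.mp (Finset.mem_range.mp hk)), hEmul]
        push_cast
        ring
      rw [h2, hp (N + 1), Finset.sum_range_succ, ← hp]
      ring
  intro j _ _ n
  induction n with
  | zero => simp
  | succ n ih =>
    have h1 : j * (m + 1) ^ (n + 1) = (m + 1) * (j * (m + 1) ^ n) := by ring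
    rw [h1, key, ih]
    ring
end

section
/- Let m ≥ 1 be an integer, δ_1,…,δ_m ∈ {+1,−1}, and let δ be the (+1,δ_1,…,δ_m)-Thue–Morse sequence. Then for every n ∈ ℕ, the polygonal sets satisfy the recurrence P(n+1) = ⋃_{j=0}^m ( p(j·(m+1)^n) + δ_j e^{2jπi/m} · P(n) ), where c + A = {c + a : a ∈ A} and cA = {ca : a ∈ A} for c ∈ ℂ, A ⊆ ℂ. -/
open Complex Set
open scoped Real Pointwise

private lemma affSeg (c w a b : ℂ) :
    (fun z => c + w * z) '' segment ℝ a b = segment ℝ (c + w * a) (c + w * b) := by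
  have := image_segment ℝ (⟨fun z => c + w * z, LinearMap.mulLeft ℝ w,
    by intro p v; simp [mul_add]; ring⟩ : ℂ →ᵃ[ℝ] ℂ) a b
  simpa using this

/-- The polygonal sets satisfy the recurrence
`P(n+1) = ⋃_{j=0}^m ( p(j·(m+1)^n) + δ_j e^{2jπi/m} · P(n) )`. -/
theorem polygonal_paths_recurrence
    (m : ℕ) (hm : 1 ≤ m)
    (δ : ℕ → ℝ) (hδ0 : δ 0 = 1)
    (hδpm : ∀ n, δ n = 1 ∨ δ n = -1)
    (hδrec : ∀ q k, k ≤ m → δ ((m + 1) * q + k) = δ q * δ k)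
    (p : ℕ → ℂ)
    (hp : ∀ n, p n = ∑ k ∈ Finset.range n,
      (δ k : ℂ) * Complex.exp (2 * Real.pi * Complex.I * k / m))
    (P : ℕ → Set ℂ)
    (hP : ∀ n, P n = ⋃ k ∈ Finset.Icc 1 ((m + 1) ^ n), segment ℝ (p (k - 1)) (p k)) :
    ∀ n : ℕ, P (n + 1) = ⋃ j ∈ Finset.range (m + 1),
      (fun z => p (j * (m + 1) ^ n) +
        (δ j : ℂ) * Complex.exp (2 * Real.pi * Complex.I * j / m) * z) '' P n := by
  -- self-similarity of δ
  have hδpow : ∀ n q r, r < (m + 1) ^ n → δ ((m + 1) ^ n * q + r) = δ q * δ r := by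
    intro n
    induction n with
    | zero =>
      intro q r hr
      rw [pow_zero] at hr
      interval_cases r
      simp [hδ0]
    | succ n ih =>
      intro q r hr
      obtain ⟨r', k, hk, hr', hrk⟩ : ∃ r' k, k ≤ m ∧ r' < (m + 1) ^ n ∧ r = (m + 1) * r' + k := by
        refine ⟨r / (m + 1), r % (m + 1), Nat.lt_succ_iff.mp (Nat.mod_lt _ (by omega)), ?_,
          (Nat.div_add_mod r (m + 1)).symm⟩
        rw [Nat.div_lt_iff_lt_mul (show 0 < m + 1 by omega)]
        calc r < (m + 1) ^ (n + 1) := hr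
        _ = (m + 1) ^ n * (m + 1) := by ring
      have key : (m + 1) ^ (n + 1) * q + r = (m + 1) * ((m + 1) ^ n * q + r') + k := by
        rw [hrk]; ring
      rw [key, hδrec _ _ hk, ih _ _ hr', hrk, hδrec _ _ hk]
      ring
  have hm0 : (m : ℂ) ≠ 0 := Nat.cast_ne_zero.mpr (by omega)
  -- exponential periodicity
  have hexp : ∀ n j : ℕ,
      Complex.exp (2 * Real.pi * Complex.I * ((j * (m + 1) ^ n : ℕ) : ℂ) / m)
        = Complex.exp (2 * Real.pi * Complex.I * j / m) := by
    intro n j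
    obtain ⟨t, ht⟩ : ∃ t, (m + 1) ^ n = m * t + 1 := by
      induction n with
      | zero => exact ⟨0, by simp⟩
      | succ n ih =>
        obtain ⟨t, ht⟩ := ih
        exact ⟨m * t + t + 1, by rw [pow_succ, ht]; ring⟩
    have hcast : ((j * (m + 1) ^ n : ℕ) : ℂ) = (j : ℂ) + (m : ℂ) * ((j * t : ℕ) : ℂ) := by
      rw [ht]; push_cast; ring
    rw [hcast, mul_add, add_div, Complex.exp_add]
    have h2 : 2 * Real.pi * Complex.I * ((m : ℂ) * ((j * t : ℕ) : ℂ)) / m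
        = ((j * t : ℕ) : ℂ) * (2 * Real.pi * Complex.I) := by
      field_simp
    rw [h2, Complex.exp_nat_mul_two_pi_mul_I, mul_one]
  -- shifted partial sums
  have hadd : ∀ n j k, j ≤ m → k ≤ (m + 1) ^ n →
      p (j * (m + 1) ^ n + k) = p (j * (m + 1) ^ n) +
        (δ j : ℂ) * Complex.exp (2 * Real.pi * Complex.I * j / m) * p k := by
    intro n j k hj hk
    rw [hp, hp, hp, Finset.sum_range_add, Finset.mul_sum]
    congr 1
    apply Finset.sum_congr rfl
    intro r hr
    rw [Finset.mem_range] at hr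
    have hrn : r < (m + 1) ^ n := lt_of_lt_of_le hr hk
    have hδ : δ (j * (m + 1) ^ n + r) = δ j * δ r := by
      rw [mul_comm j]; exact hδpow n j r hrn
    have hsplit : ((j * (m + 1) ^ n + r : ℕ) : ℂ)
        = ((j * (m + 1) ^ n : ℕ) : ℂ) + (r : ℂ) := by push_cast; ring
    rw [hδ, hsplit, mul_add, add_div, Complex.exp_add, hexp]
    push_cast
    ring
  -- main proof
  intro n
  have hpow : 0 < (m + 1) ^ n := Nat.pow_pos (by omega)
  have hpowsucc : (m + 1) ^ (n + 1) = (m + 1) * (m + 1) ^ n := by ring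
  ext z
  simp only [hP, mem_iUnion, Finset.mem_Icc, Finset.mem_range, mem_image, exists_prop]
  constructor
  · rintro ⟨k, ⟨hk1, hk2⟩, hz⟩
    obtain ⟨a, rfl⟩ : ∃ a, k = a + 1 := ⟨k - 1, by omega⟩
    set j := a / (m + 1) ^ n with hj
    set r := a % (m + 1) ^ n with hr
    have hrlt : r < (m + 1) ^ n := Nat.mod_lt _ hpow
    have hjm : j < m + 1 := by
      rw [hj, Nat.div_lt_iff_lt_mul hpow]
      calc a < (m + 1) ^ (n + 1) := by omega
      _ = (m + 1) * (m + 1) ^ n := hpowsucc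
    have har : a = j * (m + 1) ^ n + r := by
      rw [hj, hr, mul_comm]
      exact (Nat.div_add_mod a ((m + 1) ^ n)).symm
    have h1 : p a = p (j * (m + 1) ^ n) +
        (δ j : ℂ) * Complex.exp (2 * Real.pi * Complex.I * j / m) * p r := by
      rw [har]; exact hadd n j r (by omega) (by omega)
    have h2 : p (a + 1) = p (j * (m + 1) ^ n) +
        (δ j : ℂ) * Complex.exp (2 * Real.pi * Complex.I * j / m) * p (r + 1) := by
      rw [har, add_assoc]; exact hadd n j (r + 1) (by omega) hrlt
    have himg : z ∈ (fun z => p (j * (m + 1) ^ n) +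
        (δ j : ℂ) * Complex.exp (2 * Real.pi * Complex.I * j / m) * z) ''
          segment ℝ (p r) (p (r + 1)) := by
      rw [affSeg, ← h1, ← h2]
      simpa using hz
    obtain ⟨x, hx, hfx⟩ := himg
    exact ⟨j, hjm, x, ⟨r + 1, ⟨Nat.succ_le_succ (Nat.zero_le r), hrlt⟩, by simpa using hx⟩, hfx⟩
  · rintro ⟨j, hj, y, ⟨k, ⟨hk1, hk2⟩, hy⟩, rfl⟩
    obtain ⟨a, rfl⟩ : ∃ a, k = a + 1 := ⟨k - 1, by omega⟩
    refine ⟨j * (m + 1) ^ n + (a + 1), ⟨by omega, ?_⟩, ?_⟩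
    · have : (j + 1) * (m + 1) ^ n ≤ (m + 1) ^ (n + 1) := by
        rw [hpowsucc]
        exact Nat.mul_le_mul_right _ (show j + 1 ≤ m + 1 by omega)
      nlinarith
    · have h1 : p (j * (m + 1) ^ n + a) = p (j * (m + 1) ^ n) +
          (δ j : ℂ) * Complex.exp (2 * Real.pi * Complex.I * j / m) * p a :=
        hadd n j a (by omega) (by omega)
      have h2 : p (j * (m + 1) ^ n + (a + 1)) = p (j * (m + 1) ^ n) +
          (δ j : ℂ) * Complex.exp (2 * Real.pi * Complex.I * j / m) * p (a + 1) :=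
        hadd n j (a + 1) (by omega) (by omega)
      have hidx : j * (m + 1) ^ n + (a + 1) - 1 = j * (m + 1) ^ n + a := by omega
      rw [hidx, h1, h2, ← affSeg]
      exact ⟨y, by simpa using hy, rfl⟩
end

section
/- Let m ≥ 1 be an integer, δ_1,…,δ_m ∈ {+1,−1}, and let δ be the (+1,δ_1,…,δ_m)-Thue–Morse sequence with p(m+1) ≠ 0. Define Q_n = (p(m+1))^{−n}·P(n) for n ∈ ℕ. Then for every n ∈ ℕ, Q_{n+1} = ⋃_{j=0}^m S_j(Q_n), where S_j(z) = (p(j) + δ_j e^{2jπi/m} z)/p(m+1). -/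
open Complex Set
open scoped Real Pointwise

noncomputable def tmA (m : ℕ) (δ : ℕ → ℝ) (k : ℕ) : ℂ :=
  (δ k : ℂ) * Complex.exp (2 * Real.pi * Complex.I * k / m)

lemma seg_affine_image (u v x y : ℂ) :
    (fun z => u + v * z) '' segment ℝ x y = segment ℝ (u + v * x) (u + v * y) := by
  let f : ℂ →ᵃ[ℝ] ℂ :=
    { toFun := fun z => u + v * z
      linear := LinearMap.mulLeft ℝ v
      map_vadd' := fun w z => by
        simp only [LinearMap.mulLeft_apply, vadd_eq_add]
        ring }
  have h := image_segment ℝ f x y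
  simpa [f] using h

lemma seg_smul_image (e x y : ℂ) :
    e • segment ℝ x y = segment ℝ (e * x) (e * y) := by
  rw [← Set.image_smul]
  simp only [smul_eq_mul]
  have := seg_affine_image 0 e x y
  simpa using this

lemma tmA_mult (m : ℕ) (hm : 1 ≤ m) (δ : ℕ → ℝ)
    (hδrec : ∀ q k, k ≤ m → δ ((m + 1) * q + k) = δ q * δ k) :
    ∀ q r, r ≤ m → tmA m δ ((m + 1) * q + r) = tmA m δ q * tmA m δ r := by
  intro q r hr
  have hm0 : (m : ℂ) ≠ 0 := Nat.cast_ne_zero.mpr (by omega)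
  unfold tmA
  rw [hδrec q r hr]
  have harg : 2 * (Real.pi : ℂ) * Complex.I * ((m + 1) * q + r : ℕ) / m
      = (2 * (Real.pi : ℂ) * Complex.I * q / m + 2 * (Real.pi : ℂ) * Complex.I * r / m)
        + (q : ℂ) * (2 * Real.pi * Complex.I) := by
    push_cast
    field_simp
    ring
  rw [harg, Complex.exp_add, Complex.exp_add]
  have h1 : Complex.exp ((q : ℂ) * (2 * Real.pi * Complex.I)) = 1 := by
    simpa using Complex.exp_int_mul_two_pi_mul_I (q : ℤ)
  rw [h1]
  push_cast
  ring

section pLemmas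

variable (m : ℕ) (hm : 1 ≤ m) (δ : ℕ → ℝ) (hδ0 : δ 0 = 1)
  (hδrec : ∀ q k, k ≤ m → δ ((m + 1) * q + k) = δ q * δ k)
  (p : ℕ → ℂ)
  (hp : ∀ n, p n = ∑ k ∈ Finset.range n, (δ k : ℂ) * Complex.exp (2 * Real.pi * Complex.I * k / m))

include hp

lemma hp' : ∀ n, p n = ∑ k ∈ Finset.range n, tmA m δ k := hp

lemma p_zero : p 0 = 0 := by rw [hp' m δ p hp]; simp

lemma p_add : ∀ c d, p (c + d) = p c + ∑ s ∈ Finset.range d, tmA m δ (c + s) := by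
  intro c d
  rw [hp' m δ p hp, hp' m δ p hp, Finset.sum_range_add]

lemma p_succ : ∀ n, p (n + 1) = p n + tmA m δ n := by
  intro n
  rw [hp' m δ p hp, hp' m δ p hp, Finset.sum_range_succ]

include hδ0 in
lemma p_one : p 1 = 1 := by
  rw [hp' m δ p hp]
  simp [tmA, hδ0]

include hm hδrec in
lemma keyB : ∀ q r, r ≤ m + 1 →
    p ((m + 1) * q + r) = p q * p (m + 1) + tmA m δ q * p r := by
  have hblock : ∀ q r, r ≤ m + 1 →
      ∑ s ∈ Finset.range r, tmA m δ ((m + 1) * q + s) = tmA m δ q * p r := by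
    intro q r hr
    rw [hp' m δ p hp, Finset.mul_sum]
    refine Finset.sum_congr rfl fun s hs => ?_
    exact tmA_mult m hm δ hδrec q s (by have := Finset.mem_range.mp hs; omega)
  have hfull : ∀ q, p ((m + 1) * q) = p q * p (m + 1) := by
    intro q
    induction q with
    | zero => simp [p_zero m δ p hp]
    | succ q ih =>
      have e : (m + 1) * (q + 1) = (m + 1) * q + (m + 1) := by ring
      rw [e, p_add m δ p hp, ih, hblock q (m + 1) le_rfl, p_succ m δ p hp q]
      ring
  intro q r hr
  rw [p_add m δ p hp, hfull q, hblock q r hr]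

include hm hδ0 hδrec in
lemma keyC : ∀ n q t, t ≤ (m + 1) ^ n →
    p ((m + 1) ^ n * q + t) = p q * (p (m + 1)) ^ n + tmA m δ q * p t := by
  intro n
  induction n with
  | zero =>
    intro q t ht
    simp only [pow_zero] at ht
    interval_cases t
    · simp [p_zero m δ p hp]
    · simp only [pow_zero, one_mul]
      rw [p_succ m δ p hp, p_one m δ hδ0 p hp]
      ring
  | succ n ih =>
    intro q t ht
    set B := (m + 1) ^ n with hB
    set t' := t / (m + 1) with ht'
    set r := t % (m + 1) with hrdef
    have hdm : (m + 1) * t' + r = t := Nat.div_add_mod t (m + 1)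
    have hpow : (m + 1) ^ (n + 1) = B * (m + 1) := by rw [hB, pow_succ]
    have hr : r ≤ m := by
      have := Nat.mod_lt t (show 0 < m + 1 by omega)
      omega
    have ht'B : t' ≤ B := by
      by_contra h
      push_neg at h
      have h1 : (m + 1) * (B + 1) ≤ (m + 1) * t' := Nat.mul_le_mul_left _ (by omega)
      have h2 : (m + 1) * (B + 1) = B * (m + 1) + (m + 1) := by ring
      omega
    have hsplit : (m + 1) ^ (n + 1) * q + t = (m + 1) * (B * q + t') + r := by
      have e1 : (m + 1) ^ (n + 1) * q = (m + 1) * (B * q) := by rw [hpow]; ring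
      have e2 : (m + 1) * (B * q + t') = (m + 1) * (B * q) + (m + 1) * t' := by ring
      omega
    rw [hsplit, keyB m hm δ hδrec p hp _ r (by omega), ih q t' ht'B]
    have hpt : p t = p t' * p (m + 1) + tmA m δ t' * p r := by
      rw [← hdm]
      exact keyB m hm δ hδrec p hp t' r (by omega)
    by_cases hlt : t' < B
    · have htm : tmA m δ (B * q + t') = tmA m δ q * tmA m δ t' := by
        have h1 := ih q (t' + 1) (by omega)
        have h2 := ih q t' ht'B
        have e1 : B * q + t' + 1 = B * q + (t' + 1) := by omega
        have := p_succ m δ p hp (B * q + t')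
        rw [e1, h1, h2] at this
        have h3 := p_succ m δ p hp t'
        have : tmA m δ (B * q + t') = tmA m δ q * (p (t' + 1) - p t') := by
          linear_combination -this
        rw [this, h3]
        ring
      rw [htm, hpt, pow_succ]
      ring
    · have ht'' : t' = B := by omega
      have hr0 : r = 0 := by
        have e1 : (m + 1) * t' = B * (m + 1) := by rw [ht'']; ring
        omega
      rw [hr0, p_zero m δ p hp, hpt, hr0, p_zero m δ p hp, pow_succ]
      ring

end pLemmas

lemma union_reindex {α : Type*} (B M : ℕ) (hB : 1 ≤ B) (A : ℕ → Set α) :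
    ⋃ k ∈ Finset.Icc 1 (B * (M + 1)), A k
      = ⋃ j ∈ Finset.range (M + 1), ⋃ t ∈ Finset.Icc 1 B, A (B * j + t) := by
  ext x
  simp only [mem_iUnion, Finset.mem_Icc, Finset.mem_range, exists_prop]
  constructor
  · rintro ⟨k, ⟨hk1, hk2⟩, hx⟩
    have hdm := Nat.div_add_mod (k - 1) B
    have hmod := Nat.mod_lt (k - 1) (show 0 < B by omega)
    refine ⟨(k - 1) / B, ?_, (k - 1) % B + 1, ⟨by omega, by omega⟩, ?_⟩
    · by_contra h
      push_neg at h
      have h1 : B * (M + 1) ≤ B * ((k - 1) / B) := Nat.mul_le_mul_left _ h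
      omega
    · have : B * ((k - 1) / B) + ((k - 1) % B + 1) = k := by omega
      rwa [this]
  · rintro ⟨j, hj, t, ⟨ht1, ht2⟩, hx⟩
    refine ⟨B * j + t, ⟨by omega, ?_⟩, hx⟩
    have h1 : B * j + t ≤ B * j + B := by omega
    have h2 : B * j + B = B * (j + 1) := by ring
    have h3 : B * (j + 1) ≤ B * (M + 1) := Nat.mul_le_mul_left _ (by omega)
    omega

lemma seg_affine_image2 (u v x y : ℂ) :
    (fun z => u + v * z) '' segment ℝ x y = segment ℝ (u + v * x) (u + v * y) := by
  let f : ℂ →ᵃ[ℝ] ℂ :=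
    { toFun := fun z => u + v * z
      linear := LinearMap.mulLeft ℝ v
      map_vadd' := fun w z => by
        simp only [LinearMap.mulLeft_apply, vadd_eq_add]
        ring }
  have h := image_segment ℝ f x y
  simpa [f] using h

lemma seg_affine_image' (f : ℂ → ℂ) (u v : ℂ) (hf : ∀ z, f z = u + v * z) (x y : ℂ) :
    f '' segment ℝ x y = segment ℝ (f x) (f y) := by
  rw [funext hf]
  exact seg_affine_image2 u v x y

/-- With `Q_n = (p(m+1))^{-n} • P(n)` and
`S_j(z) = (p(j) + δ_j e^{2jπi/m} z)/p(m+1)`, one has `Q_{n+1} = ⋃_{j=0}^m S_j(Q_n)`. -/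
theorem rescaled_polygonal_paths_recurrence
    (m : ℕ) (hm : 1 ≤ m)
    (δ : ℕ → ℝ) (hδ0 : δ 0 = 1)
    (hδpm : ∀ n, δ n = 1 ∨ δ n = -1)
    (hδrec : ∀ q k, k ≤ m → δ ((m + 1) * q + k) = δ q * δ k)
    (p : ℕ → ℂ)
    (hp : ∀ n, p n = ∑ k ∈ Finset.range n,
      (δ k : ℂ) * Complex.exp (2 * Real.pi * Complex.I * k / m))
    (hpne : p (m + 1) ≠ 0)
    (P : ℕ → Set ℂ)
    (hP : ∀ n, P n = ⋃ k ∈ Finset.Icc 1 ((m + 1) ^ n), segment ℝ (p (k - 1)) (p k))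
    (S : ℕ → ℂ → ℂ)
    (hS : ∀ j z, S j z = (p j + (δ j : ℂ) * Complex.exp (2 * Real.pi * Complex.I * j / m) * z)
      / p (m + 1))
    (Q : ℕ → Set ℂ)
    (hQ : ∀ n, Q n = ((p (m + 1)) ^ n)⁻¹ • P n) :
    ∀ n : ℕ, Q (n + 1) = ⋃ j ∈ Finset.range (m + 1), S j '' Q n := by
  intro n
  have hc : p (m + 1) ≠ 0 := hpne
  have hcn : p (m + 1) ^ n ≠ 0 := pow_ne_zero _ hpne
  have hB1 : 1 ≤ (m + 1) ^ n := Nat.one_le_pow _ _ (by omega)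
  -- per-piece identity
  have hseg : ∀ j t : ℕ, j ≤ m → 1 ≤ t → t ≤ (m + 1) ^ n →
      S j '' ((p (m + 1) ^ n)⁻¹ • segment ℝ (p (t - 1)) (p t))
        = (p (m + 1) ^ (n + 1))⁻¹ •
            segment ℝ (p ((m + 1) ^ n * j + t - 1)) (p ((m + 1) ^ n * j + t)) := by
    intro j t hj ht1 htB
    have hend : ∀ s : ℕ, s ≤ (m + 1) ^ n →
        S j ((p (m + 1) ^ n)⁻¹ * p s)
          = (p (m + 1) ^ (n + 1))⁻¹ * p ((m + 1) ^ n * j + s) := by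
      intro s hs
      rw [hS, keyC m hm δ hδ0 hδrec p hp n j s hs]
      simp only [tmA]
      field_simp
      ring
    have e1 : (m + 1) ^ n * j + t - 1 = (m + 1) ^ n * j + (t - 1) := by omega
    rw [seg_smul_image,
      seg_affine_image' (S j) (p j / p (m + 1))
        ((δ j : ℂ) * Complex.exp (2 * Real.pi * Complex.I * j / m) / p (m + 1))
        (fun z => by rw [hS]; ring) _ _,
      seg_smul_image, e1, ← hend (t - 1) (by omega), ← hend t htB]
  rw [hQ (n + 1), hP (n + 1), hQ n, hP n]
  simp only [smul_set_iUnion₂, image_iUnion₂]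
  rw [show (m + 1) ^ (n + 1) = (m + 1) ^ n * (m + 1) from pow_succ _ _,
    union_reindex ((m + 1) ^ n) m hB1]
  apply iUnion_congr; intro j; apply iUnion_congr; intro hj
  apply iUnion_congr; intro t; apply iUnion_congr; intro ht
  have hj' : j ≤ m := by have := Finset.mem_range.mp hj; omega
  have ht' := Finset.mem_Icc.mp ht
  exact (hseg j t hj' ht'.1 ht'.2).symm
end

section
/- Let m ≥ 2 be an integer and let δ_0,…,δ_m ∈ {+1,−1} be given by δ_k = +1 for 0 ≤ k ≤ ⌊m/4⌋, δ_k = −1 for ⌊m/4⌋+1 ≤ k ≤ m−⌊m/4⌋−1, and δ_k = +1 for m−⌊m/4⌋ ≤ k ≤ m. Then 3 ≤ Σ_{k=0}^m δ_k · cos(2kπ/m) ≤ m+1. -/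
open scoped Real

/-- For the sign pattern `δ_k = +1` for `0 ≤ k ≤ ⌊m/4⌋`, `δ_k = −1` for
`⌊m/4⌋+1 ≤ k ≤ m−⌊m/4⌋−1`, `δ_k = +1` for `m−⌊m/4⌋ ≤ k ≤ m`, one has
`3 ≤ Σ_{k=0}^m δ_k cos(2kπ/m) ≤ m+1`. -/
theorem sum_delta_cos_between_three_and_m_add_one
    (m : ℕ) (hm : 2 ≤ m)
    (δ : ℕ → ℝ)
    (hδ1 : ∀ k, k ≤ m / 4 → δ k = 1)
    (hδ2 : ∀ k, m / 4 + 1 ≤ k → k ≤ m - m / 4 - 1 → δ k = -1)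
    (hδ3 : ∀ k, m - m / 4 ≤ k → k ≤ m → δ k = 1) :
    3 ≤ ∑ k ∈ Finset.range (m + 1), δ k * Real.cos (2 * k * Real.pi / m) ∧
      ∑ k ∈ Finset.range (m + 1), δ k * Real.cos (2 * k * Real.pi / m) ≤ m + 1 := by
  have hpi := Real.pi_pos
  have hmR : (0:ℝ) < (m:ℝ) := by exact_mod_cast (by omega : 0 < m)
  -- every term is nonnegative
  have hnn : ∀ k, k ≤ m → 0 ≤ δ k * Real.cos (2 * k * Real.pi / m) := by
    intro k hk
    rcases le_or_gt k (m/4) with h1 | h1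
    · rw [hδ1 k h1, one_mul]
      apply Real.cos_nonneg_of_mem_Icc
      constructor
      · have : (0:ℝ) ≤ 2 * k * Real.pi / m := by positivity
        linarith
      · rw [div_le_iff₀ hmR]
        have h4 : (4*k:ℝ) ≤ m := by exact_mod_cast (by omega : 4*k ≤ m)
        nlinarith
    · rcases le_or_gt k (m - m/4 - 1) with h2 | h2
      · rw [hδ2 k (by omega) h2, neg_one_mul, neg_nonneg]
        apply Real.cos_nonpos_of_pi_div_two_le_of_le
        · rw [le_div_iff₀ hmR]
          have h4 : (m:ℝ) ≤ 4*k := by exact_mod_cast (by omega : m ≤ 4*k)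
          nlinarith
        · rw [div_le_iff₀ hmR]
          have h4 : (4*k:ℝ) ≤ 3*m := by exact_mod_cast (by omega : 4*k ≤ 3*m)
          nlinarith
      · rw [hδ3 k (by omega) hk, one_mul, ← Real.cos_sub_two_pi]
        apply Real.cos_nonneg_of_mem_Icc
        have h3m : (3*m:ℝ) ≤ 4*k := by exact_mod_cast (by omega : 3*m ≤ 4*k)
        have hkm : (k:ℝ) ≤ m := by exact_mod_cast hk
        constructor
        · have key : (3:ℝ)/2 * Real.pi ≤ 2 * k * Real.pi / m := by
            rw [le_div_iff₀ hmR]; nlinarith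
          linarith
        · have key : 2 * (k:ℝ) * Real.pi / m ≤ 2 * Real.pi := by
            rw [div_le_iff₀ hmR]; nlinarith
          linarith
  constructor
  · rcases Nat.even_or_odd m with ⟨j, hj⟩ | ⟨j, hj⟩
    · -- m even
      have hj1 : 1 ≤ j := by omega
      have hjR : (0:ℝ) < (j:ℝ) := by exact_mod_cast hj1
      have hsub : ({0, j, m} : Finset ℕ) ⊆ Finset.range (m+1) := by
        intro x hx
        simp only [Finset.mem_insert, Finset.mem_singleton] at hx
        rw [Finset.mem_range]; omega
      have hle := Finset.sum_le_sum_of_subset_of_nonneg hsub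
        (fun i hi _ => hnn i (by simpa [Finset.mem_range, Nat.lt_succ_iff] using hi))
      have h0 : (0:ℕ) ∉ ({j, m} : Finset ℕ) := by simp; omega
      have hjm : j ∉ ({m} : Finset ℕ) := by simp; omega
      rw [Finset.sum_insert h0, Finset.sum_insert hjm, Finset.sum_singleton] at hle
      have e0 : δ 0 * Real.cos (2 * (0:ℕ) * Real.pi / m) = 1 := by
        rw [hδ1 0 (by omega)]; simp
      have ej : δ j * Real.cos (2 * j * Real.pi / m) = 1 := by
        rw [hδ2 j (by omega) (by omega)]
        have : 2 * (j:ℝ) * Real.pi / m = Real.pi := by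
          have hmj : (m:ℝ) = 2*j := by exact_mod_cast (by omega : m = 2*j)
          rw [hmj]; field_simp
        rw [this, Real.cos_pi]; ring
      have em : δ m * Real.cos (2 * m * Real.pi / m) = 1 := by
        rw [hδ3 m (by omega) le_rfl]
        have : 2 * (m:ℝ) * Real.pi / m = 2 * Real.pi := by field_simp
        rw [this, Real.cos_two_pi]; ring
      rw [e0, ej, em] at hle
      linarith
    · -- m odd
      have hj1 : 1 ≤ j := by omega
      have hsub : ({0, j, j+1, m} : Finset ℕ) ⊆ Finset.range (m+1) := by
        intro x hx
        simp only [Finset.mem_insert, Finset.mem_singleton] at hx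
        rw [Finset.mem_range]; omega
      have hle := Finset.sum_le_sum_of_subset_of_nonneg hsub
        (fun i hi _ => hnn i (by simpa [Finset.mem_range, Nat.lt_succ_iff] using hi))
      have h0 : (0:ℕ) ∉ ({j, j+1, m} : Finset ℕ) := by simp; omega
      have hja : j ∉ ({j+1, m} : Finset ℕ) := by simp; omega
      have hjb : j+1 ∉ ({m} : Finset ℕ) := by simp; omega
      rw [Finset.sum_insert h0, Finset.sum_insert hja, Finset.sum_insert hjb,
        Finset.sum_singleton] at hle
      have hmj : (m:ℝ) = 2*j+1 := by exact_mod_cast (by omega : m = 2*j+1)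
      have e0 : δ 0 * Real.cos (2 * (0:ℕ) * Real.pi / m) = 1 := by
        rw [hδ1 0 (by omega)]; simp
      have ej : δ j * Real.cos (2 * j * Real.pi / m) = Real.cos (Real.pi / m) := by
        rw [hδ2 j (by omega) (by omega)]
        have : 2 * (j:ℝ) * Real.pi / m = Real.pi - Real.pi / m := by
          rw [hmj]; field_simp; ring
        rw [this, Real.cos_pi_sub]; ring
      have ej1 : δ (j+1) * Real.cos (2 * (j+1:ℕ) * Real.pi / m) = Real.cos (Real.pi / m) := by
        rw [hδ2 (j+1) (by omega) (by omega)]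
        have : 2 * ((j:ℝ)+1) * Real.pi / m = Real.pi / m + Real.pi := by
          rw [hmj]; field_simp; ring
        push_cast
        rw [this, Real.cos_add_pi]; ring
      have em : δ m * Real.cos (2 * m * Real.pi / m) = 1 := by
        rw [hδ3 m (by omega) le_rfl]
        have : 2 * (m:ℝ) * Real.pi / m = 2 * Real.pi := by field_simp
        rw [this, Real.cos_two_pi]; ring
      rw [e0, ej, ej1, em] at hle
      have hcos : (1:ℝ)/2 ≤ Real.cos (Real.pi / m) := by
        rw [← Real.cos_pi_div_three]
        apply Real.cos_le_cos_of_nonneg_of_le_pi (by positivity) (by linarith)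
        apply div_le_div_of_nonneg_left (le_of_lt hpi) (by norm_num)
        exact_mod_cast (by omega : 3 ≤ m)
      linarith
  · -- upper bound
    have hone : ∀ k ∈ Finset.range (m+1), δ k * Real.cos (2 * k * Real.pi / m) ≤ 1 := by
      intro k hk
      rw [Finset.mem_range, Nat.lt_succ_iff] at hk
      have hδ : δ k = 1 ∨ δ k = -1 := by
        rcases le_or_gt k (m/4) with h1 | h1
        · exact Or.inl (hδ1 k h1)
        · rcases le_or_gt k (m - m/4 - 1) with h2 | h2
          · exact Or.inr (hδ2 k (by omega) h2)
          · exact Or.inl (hδ3 k (by omega) hk)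
      rcases hδ with h | h <;> rw [h]
      · simpa using Real.cos_le_one _
      · have := Real.neg_one_le_cos (2 * (k:ℝ) * Real.pi / m)
        linarith
    calc ∑ k ∈ Finset.range (m + 1), δ k * Real.cos (2 * k * Real.pi / m)
        ≤ ∑ _k ∈ Finset.range (m + 1), (1:ℝ) := Finset.sum_le_sum hone
      _ = m + 1 := by simp
end

section
/- Let m ≥ 4 be an integer with m ≡ 0 (mod 4), and let δ_0,…,δ_m ∈ {+1,−1} be given by δ_k = +1 for 0 ≤ k ≤ m/4, δ_k = −1 for m/4+1 ≤ k ≤ m−m/4−1, and δ_k = +1 for m−m/4 ≤ k ≤ m. Then the imaginary part of p(m/2) = Σ_{k=0}^{m/2−1} δ_k e^{2kπi/m} equals 1; equivalently, Σ_{k=0}^{m/2−1} δ_k · sin(2kπ/m) = 1. -/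
open Complex
open scoped Real

/-- For `m ≡ 0 (mod 4)`, `m ≥ 4`, with the sign pattern `δ_k = +1` for
`0 ≤ k ≤ m/4`, `δ_k = −1` for `m/4+1 ≤ k ≤ m−m/4−1`, `δ_k = +1` for `m−m/4 ≤ k ≤ m`,
the imaginary part of `p(m/2)` equals `1`; equivalently
`Σ_{k=0}^{m/2−1} δ_k sin(2kπ/m) = 1`. -/
theorem im_p_half_eq_one_of_mod_four_eq_zero
    (m : ℕ) (hm : 4 ≤ m) (hm4 : m % 4 = 0)
    (δ : ℕ → ℝ)
    (hδ1 : ∀ k, k ≤ m / 4 → δ k = 1)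
    (hδ2 : ∀ k, m / 4 + 1 ≤ k → k ≤ m - m / 4 - 1 → δ k = -1)
    (hδ3 : ∀ k, m - m / 4 ≤ k → k ≤ m → δ k = 1) :
    (∑ k ∈ Finset.range (m / 2),
        (δ k : ℂ) * Complex.exp (2 * Real.pi * Complex.I * k / m)).im = 1 ∧
      ∑ k ∈ Finset.range (m / 2), δ k * Real.sin (2 * k * Real.pi / m) = 1 := by
  obtain ⟨n, rfl⟩ : ∃ n, m = 4 * n := ⟨m / 4, by omega⟩
  have hn : 1 ≤ n := by omega
  have h2 : 4 * n / 2 = 2 * n := by omega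
  have h4 : 4 * n / 4 = n := by omega
  rw [h4] at hδ1 hδ2
  have hnR : (0:ℝ) < (n:ℝ) := by exact_mod_cast hn
  set f : ℕ → ℝ := fun k => Real.sin (2 * k * Real.pi / (4 * n)) with hf
  have hrefl : ∀ k, n + 1 ≤ k → k < 2 * n → f k = f (2 * n - k) := by
    intro k h1 h2'
    have hc : ((2 * n - k : ℕ) : ℝ) = 2 * (n:ℝ) - k := by
      push_cast [Nat.cast_sub (by omega : k ≤ 2 * n)]; ring
    have harg : 2 * (k:ℝ) * Real.pi / (4 * n)
        = Real.pi - 2 * (2 * (n:ℝ) - k) * Real.pi / (4 * n) := by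
      field_simp
      ring
    simp only [hf, hc, harg, Real.sin_pi_sub]
  have hreal : ∑ k ∈ Finset.range (2 * n), δ k * f k = 1 := by
    rw [Finset.range_eq_Ico,
        ← Finset.sum_Ico_consecutive _ (by omega : 0 ≤ n + 1) (by omega : n + 1 ≤ 2 * n)]
    have e1 : ∑ k ∈ Finset.Ico 0 (n + 1), δ k * f k = ∑ k ∈ Finset.Ico 0 (n + 1), f k := by
      refine Finset.sum_congr rfl fun k hk => ?_
      rw [hδ1 k (by simp [Finset.mem_Ico] at hk; omega), one_mul]
    have e2 : ∑ k ∈ Finset.Ico (n + 1) (2 * n), δ k * f k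
        = -∑ k ∈ Finset.Ico 1 n, f k := by
      rw [← Finset.sum_neg_distrib]
      refine Finset.sum_nbij' (fun k => 2 * n - k) (fun k => 2 * n - k) ?_ ?_ ?_ ?_ ?_
      · intro a ha; simp [Finset.mem_Ico] at ha ⊢; omega
      · intro a ha; simp [Finset.mem_Ico] at ha ⊢; omega
      · intro a ha; simp only [Finset.mem_Ico] at ha; show 2 * n - (2 * n - a) = a; omega
      · intro a ha; simp only [Finset.mem_Ico] at ha; show 2 * n - (2 * n - a) = a; omega
      · intro a ha
        simp only [Finset.mem_Ico] at ha
        rw [hδ2 a ha.1 (by omega), hrefl a ha.1 ha.2]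
        ring
    rw [e1, e2]
    have e3 : ∑ k ∈ Finset.Ico 0 (n + 1), f k
        = f 0 + ∑ k ∈ Finset.Ico 1 n, f k + f n := by
      rw [Finset.sum_Ico_succ_top (by omega : 0 ≤ n),
          ← Finset.sum_Ico_consecutive _ (by omega : 0 ≤ 1) (by omega : 1 ≤ n)]
      simp
    have hf0 : f 0 = 0 := by simp [hf]
    have hfn : f n = 1 := by
      have : 2 * (n:ℝ) * Real.pi / (4 * n) = Real.pi / 2 := by field_simp; ring
      simp [hf, this]
    rw [e3, hf0, hfn]; ring
  have hterm : ∀ k : ℕ, ((δ k : ℂ) * Complex.exp (2 * Real.pi * Complex.I * k / ((4 * n : ℕ) : ℂ))).im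
      = δ k * f k := by
    intro k
    have harg : (2 * Real.pi * Complex.I * k / ((4 * n : ℕ) : ℂ))
        = ((2 * k * Real.pi / (4 * n) : ℝ) : ℂ) * Complex.I := by
      push_cast
      field_simp
    rw [harg, Complex.exp_mul_I, ← Complex.ofReal_cos, ← Complex.ofReal_sin]
    simp only [hf, Complex.mul_im, Complex.add_im, Complex.add_re, Complex.ofReal_re,
      Complex.ofReal_im, Complex.mul_re, Complex.I_re, Complex.I_im]
    ring
  constructor
  · rw [h2, Complex.im_sum]
    simp only [hterm]
    exact hreal
  · rw [h2, ← hreal]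
    refine Finset.sum_congr rfl fun k _ => ?_
    push_cast
    rfl
end

section
/- Let m ≥ 5 be an integer with m ≡ 1 (mod 4), and let δ_0,…,δ_m ∈ {+1,−1} be given by δ_k = +1 for 0 ≤ k ≤ ⌊m/4⌋, δ_k = −1 for ⌊m/4⌋+1 ≤ k ≤ m−⌊m/4⌋−1, and δ_k = +1 for m−⌊m/4⌋ ≤ k ≤ m. Then the imaginary part of p((m+1)/2) = Σ_{k=0}^{(m+1)/2−1} δ_k e^{2kπi/m} is nonnegative; equivalently, Σ_{k=0}^{(m−1)/2} δ_k · sin(2kπ/m) ≥ 0. -/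
open Complex
open scoped Real

/-- For `m ≡ 1 (mod 4)`, `m ≥ 5`, with the sign pattern `δ_k = +1` for
`0 ≤ k ≤ ⌊m/4⌋`, `δ_k = −1` for `⌊m/4⌋+1 ≤ k ≤ m−⌊m/4⌋−1`, `δ_k = +1` for
`m−⌊m/4⌋ ≤ k ≤ m`, the imaginary part of `p((m+1)/2)` is nonnegative; equivalently
`Σ_{k=0}^{(m−1)/2} δ_k sin(2kπ/m) ≥ 0`. -/
theorem im_p_half_nonneg_of_mod_four_eq_one
    (m : ℕ) (hm : 5 ≤ m) (hm4 : m % 4 = 1)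
    (δ : ℕ → ℝ)
    (hδ1 : ∀ k, k ≤ m / 4 → δ k = 1)
    (hδ2 : ∀ k, m / 4 + 1 ≤ k → k ≤ m - m / 4 - 1 → δ k = -1)
    (hδ3 : ∀ k, m - m / 4 ≤ k → k ≤ m → δ k = 1) :
    0 ≤ (∑ k ∈ Finset.range ((m + 1) / 2),
        (δ k : ℂ) * Complex.exp (2 * Real.pi * Complex.I * k / m)).im ∧
      0 ≤ ∑ k ∈ Finset.range ((m + 1) / 2), δ k * Real.sin (2 * k * Real.pi / m) := by
  obtain ⟨t, rfl⟩ : ∃ t, m = 4 * t + 1 := ⟨m / 4, by omega⟩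
  have ht : 1 ≤ t := by omega
  have hdiv2 : (4 * t + 1 + 1) / 2 = 2 * t + 1 := by omega
  have hdiv4 : (4 * t + 1) / 4 = t := by omega
  have hmR : ((4 * t + 1 : ℕ) : ℝ) = 4 * t + 1 := by push_cast; ring
  have hmpos : (0 : ℝ) < ((4 * t + 1 : ℕ) : ℝ) := by
    rw [hmR]; positivity
  have htR : (1 : ℝ) ≤ (t : ℝ) := by exact_mod_cast ht
  -- the key real inequality
  have key : 0 ≤ ∑ k ∈ Finset.range ((4 * t + 1 + 1) / 2),
      δ k * Real.sin (2 * k * Real.pi / (4 * t + 1 : ℕ)) := by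
    rw [hdiv2]
    have hsplit : ∑ k ∈ Finset.range (2 * t + 1),
        δ k * Real.sin (2 * k * Real.pi / (4 * t + 1 : ℕ))
        = (∑ k ∈ Finset.range (t + 1), δ k * Real.sin (2 * k * Real.pi / (4 * t + 1 : ℕ)))
          + ∑ k ∈ Finset.Ico (t + 1) (2 * t + 1),
              δ k * Real.sin (2 * k * Real.pi / (4 * t + 1 : ℕ)) := by
      rw [Finset.range_eq_Ico, ← Finset.sum_Ico_consecutive _ (show 0 ≤ t + 1 by omega) (show t + 1 ≤ 2 * t + 1 by omega)]
      rw [Finset.range_eq_Ico]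
    rw [hsplit]
    have hA : ∑ k ∈ Finset.range (t + 1), δ k * Real.sin (2 * k * Real.pi / (4 * t + 1 : ℕ))
        = ∑ j ∈ Finset.range t, Real.sin (2 * (j + 1) * Real.pi / (4 * t + 1 : ℕ)) := by
      rw [Finset.sum_range_succ']
      have h0 : δ 0 * Real.sin (2 * (0 : ℕ) * Real.pi / (4 * t + 1 : ℕ)) = 0 := by
        simp
      rw [h0, add_zero]
      refine Finset.sum_congr rfl fun j hj => ?_
      rw [hδ1 (j + 1) (by simp at hj; omega)]
      push_cast
      ring_nf
    have hB : ∑ k ∈ Finset.Ico (t + 1) (2 * t + 1),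
        δ k * Real.sin (2 * k * Real.pi / (4 * t + 1 : ℕ))
        = ∑ j ∈ Finset.range t, (- Real.sin ((2 * j + 1) * Real.pi / (4 * t + 1 : ℕ))) := by
      rw [Finset.sum_Ico_eq_sum_range]
      have hlen : 2 * t + 1 - (t + 1) = t := by omega
      rw [hlen]
      rw [← Finset.sum_range_reflect]
      refine Finset.sum_congr rfl fun j hj => ?_
      simp only [Finset.mem_range] at hj
      have hδ : δ (t + 1 + (t - 1 - j)) = -1 := by
        apply hδ2 <;> omega
      rw [hδ]
      have hidx : (((t + 1 + (t - 1 - j) : ℕ)) : ℝ) = 2 * t - j := by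
        have : (t + 1 + (t - 1 - j) : ℕ) = 2 * t - j := by omega
        rw [this]
        push_cast [Nat.cast_sub (by omega : j ≤ 2 * t)]
        ring
      rw [hidx]
      have hang : 2 * (2 * (t : ℝ) - j) * Real.pi / ((4 * t + 1 : ℕ) : ℝ)
          = Real.pi - (2 * j + 1) * Real.pi / ((4 * t + 1 : ℕ) : ℝ) := by
        rw [hmR]
        field_simp
        ring
      rw [hang, Real.sin_pi_sub]
      ring
    rw [hA, hB, ← Finset.sum_add_distrib]
    apply Finset.sum_nonneg
    intro j hj
    simp only [Finset.mem_range] at hj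
    have hjt : (j : ℝ) + 1 ≤ (t : ℝ) := by exact_mod_cast hj
    have hπ := Real.pi_pos
    have h1 : (0 : ℝ) ≤ (2 * j + 1) * Real.pi / ((4 * t + 1 : ℕ) : ℝ) := by positivity
    have h2 : (2 * (j : ℝ) + 1) * Real.pi / ((4 * t + 1 : ℕ) : ℝ)
        ≤ 2 * ((j : ℝ) + 1) * Real.pi / ((4 * t + 1 : ℕ) : ℝ) := by
      gcongr
      nlinarith
    have h3 : 2 * ((j : ℝ) + 1) * Real.pi / ((4 * t + 1 : ℕ) : ℝ) ≤ Real.pi / 2 := by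
      rw [hmR, div_le_div_iff₀ (by positivity) (by norm_num)]
      nlinarith
    have := Real.sin_le_sin_of_le_of_le_pi_div_two
      (by linarith : -(Real.pi / 2) ≤ (2 * (j : ℝ) + 1) * Real.pi / ((4 * t + 1 : ℕ) : ℝ))
      h3 h2
    linarith
  refine ⟨?_, key⟩
  -- the imaginary part equals the real sum
  have him : (∑ k ∈ Finset.range ((4 * t + 1 + 1) / 2),
      (δ k : ℂ) * Complex.exp (2 * Real.pi * Complex.I * k / (4 * t + 1 : ℕ))).im
      = ∑ k ∈ Finset.range ((4 * t + 1 + 1) / 2),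
          δ k * Real.sin (2 * k * Real.pi / (4 * t + 1 : ℕ)) := by
    rw [Complex.im_sum]
    refine Finset.sum_congr rfl fun k hk => ?_
    have harg : 2 * (Real.pi : ℂ) * Complex.I * k / (4 * t + 1 : ℕ)
        = ((2 * k * Real.pi / ((4 * t + 1 : ℕ) : ℝ) : ℝ) : ℂ) * Complex.I := by
      push_cast
      field_simp
    rw [harg, Complex.mul_im, Complex.exp_ofReal_mul_I_im, Complex.exp_ofReal_mul_I_re]
    simp
  rw [him]
  exact key
end

section
/- Let m ≥ 2 be an integer with m ≡ 2 (mod 4), and let δ_0,…,δ_m ∈ {+1,−1} be given by δ_k = +1 for 0 ≤ k ≤ ⌊m/4⌋, δ_k = −1 for ⌊m/4⌋+1 ≤ k ≤ m−⌊m/4⌋−1, and δ_k = +1 for m−⌊m/4⌋ ≤ k ≤ m. Then the imaginary part of p(m/2) = Σ_{k=0}^{m/2−1} δ_k e^{2kπi/m} equals 0; equivalently, Σ_{k=0}^{m/2−1} δ_k · sin(2kπ/m) = 0. -/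
open Complex
open scoped Real

/-- For `m ≡ 2 (mod 4)`, `m ≥ 2`, with the sign pattern `δ_k = +1` for
`0 ≤ k ≤ ⌊m/4⌋`, `δ_k = −1` for `⌊m/4⌋+1 ≤ k ≤ m−⌊m/4⌋−1`, `δ_k = +1` for
`m−⌊m/4⌋ ≤ k ≤ m`, the imaginary part of `p(m/2)` equals `0`; equivalently
`Σ_{k=0}^{m/2−1} δ_k sin(2kπ/m) = 0`. -/
theorem im_p_half_eq_zero_of_mod_four_eq_two
    (m : ℕ) (hm : 2 ≤ m) (hm4 : m % 4 = 2)
    (δ : ℕ → ℝ)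
    (hδ1 : ∀ k, k ≤ m / 4 → δ k = 1)
    (hδ2 : ∀ k, m / 4 + 1 ≤ k → k ≤ m - m / 4 - 1 → δ k = -1)
    (hδ3 : ∀ k, m - m / 4 ≤ k → k ≤ m → δ k = 1) :
    (∑ k ∈ Finset.range (m / 2),
        (δ k : ℂ) * Complex.exp (2 * Real.pi * Complex.I * k / m)).im = 0 ∧
      ∑ k ∈ Finset.range (m / 2), δ k * Real.sin (2 * k * Real.pi / m) = 0 := by
  obtain ⟨t, ht⟩ : ∃ t, m = 4 * t + 2 := ⟨m / 4, by omega⟩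
  have hmR : (m : ℝ) ≠ 0 := Nat.cast_ne_zero.mpr (by omega)
  have ht4 : m / 4 = t := by omega
  have ht2 : m / 2 = 2 * t + 1 := by omega
  -- reflection identity for g k := sin (2 k π / m)
  have hg : ∀ k : ℕ, k ≤ 2 * t + 1 →
      Real.sin (2 * ((2 * t + 1 - k : ℕ) : ℝ) * Real.pi / m)
        = Real.sin (2 * (k : ℝ) * Real.pi / m) := by
    intro k hk
    have hc : ((2 * t + 1 - k : ℕ) : ℝ) = (2 * t + 1 : ℝ) - k := by
      push_cast [Nat.cast_sub hk]; ring
    have harg : 2 * ((2 * t + 1 - k : ℕ) : ℝ) * Real.pi / m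
        = Real.pi - 2 * (k : ℝ) * Real.pi / m := by
      rw [hc]
      have : (m : ℝ) = 4 * t + 2 := by push_cast [ht]; ring
      field_simp [this]
      linarith
    rw [harg, Real.sin_pi_sub]
  have key : ∑ k ∈ Finset.range (m / 2), δ k * Real.sin (2 * k * Real.pi / m) = 0 := by
    rw [ht2, Finset.range_eq_Ico,
      ← Finset.sum_Ico_consecutive _ (by omega : 0 ≤ t + 1) (by omega : t + 1 ≤ 2 * t + 1)]
    have h1 : ∑ k ∈ Finset.Ico 0 (t + 1), δ k * Real.sin (2 * k * Real.pi / m)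
        = ∑ k ∈ Finset.range (t + 1), Real.sin (2 * (k : ℝ) * Real.pi / m) := by
      rw [← Finset.range_eq_Ico]
      refine Finset.sum_congr rfl fun k hk => ?_
      rw [hδ1 k (by simp at hk; omega), one_mul]
    have h2 : ∑ k ∈ Finset.Ico (t + 1) (2 * t + 1), δ k * Real.sin (2 * k * Real.pi / m)
        = -∑ k ∈ Finset.Ico (t + 1) (2 * t + 1), Real.sin (2 * (k : ℝ) * Real.pi / m) := by
      rw [← Finset.sum_neg_distrib]
      refine Finset.sum_congr rfl fun k hk => ?_
      simp only [Finset.mem_Ico] at hk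
      rw [hδ2 k (by omega) (by omega)]
      ring
    rw [h1, h2]
    have h3 : ∑ k ∈ Finset.Ico (t + 1) (2 * t + 1), Real.sin (2 * (k : ℝ) * Real.pi / m)
        = ∑ j ∈ Finset.range t, Real.sin (2 * ((j + 1 : ℕ) : ℝ) * Real.pi / m) := by
      have hn : (2 * t + 1 - (t + 1) : ℕ) = t := by omega
      rw [Finset.sum_Ico_eq_sum_range, hn]
      have heq : ∀ j ∈ Finset.range t,
          Real.sin (2 * ((t + 1 + j : ℕ) : ℝ) * Real.pi / m)
            = Real.sin (2 * ((t - j : ℕ) : ℝ) * Real.pi / m) := by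
        intro j hj
        simp only [Finset.mem_range] at hj
        have : (2 * t + 1 - (t + 1 + j) : ℕ) = t - j := by omega
        rw [← this, hg (t + 1 + j) (by omega)]
      rw [Finset.sum_congr rfl heq,
        ← Finset.sum_range_reflect (fun j => Real.sin (2 * ((j + 1 : ℕ) : ℝ) * Real.pi / m)) t]
      refine Finset.sum_congr rfl fun j hj => ?_
      simp only [Finset.mem_range] at hj
      have : (t - j : ℕ) = t - 1 - j + 1 := by omega
      rw [this]
    have h4 : ∑ k ∈ Finset.range (t + 1), Real.sin (2 * (k : ℝ) * Real.pi / m)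
        = ∑ j ∈ Finset.range t, Real.sin (2 * ((j + 1 : ℕ) : ℝ) * Real.pi / m) := by
      rw [Finset.sum_range_succ']
      norm_num
    rw [h3, h4]
    ring
  refine ⟨?_, key⟩
  have him : (∑ k ∈ Finset.range (m / 2),
      (δ k : ℂ) * Complex.exp (2 * Real.pi * Complex.I * k / m)).im
      = ∑ k ∈ Finset.range (m / 2), δ k * Real.sin (2 * k * Real.pi / m) := by
    rw [Complex.im_sum]
    refine Finset.sum_congr rfl fun k _ => ?_
    have harg : (2 * (Real.pi : ℂ) * Complex.I * k / m)
        = ((2 * k * Real.pi / m : ℝ) : ℂ) * Complex.I := by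
      push_cast
      ring
    rw [harg]
    simp only [Complex.mul_im, Complex.exp_ofReal_mul_I_im, Complex.ofReal_re,
      Complex.ofReal_im, zero_mul, add_zero]
  rw [him, key]
end

section
/- Let m ≥ 7 be an integer with m ≡ 3 (mod 4), and let δ_0,…,δ_m ∈ {+1,−1} be given by δ_k = +1 for 0 ≤ k ≤ ⌊m/4⌋, δ_k = −1 for ⌊m/4⌋+1 ≤ k ≤ m−⌊m/4⌋−1, and δ_k = +1 for m−⌊m/4⌋ ≤ k ≤ m. Then the imaginary part of p((m+1)/2) = Σ_{k=0}^{(m+1)/2−1} δ_k e^{2kπi/m} is strictly negative; equivalently, Σ_{k=0}^{⌊m/4⌋}( sin(2kπ/m) − sin((2k+1)π/m) ) < 0. -/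
open Complex
open scoped Real

/-- For `m ≡ 3 (mod 4)`, `m ≥ 7`, with the sign pattern `δ_k = +1` for
`0 ≤ k ≤ ⌊m/4⌋`, `δ_k = −1` for `⌊m/4⌋+1 ≤ k ≤ m−⌊m/4⌋−1`, `δ_k = +1` for
`m−⌊m/4⌋ ≤ k ≤ m`, the imaginary part of `p((m+1)/2)` is strictly negative;
equivalently `Σ_{k=0}^{⌊m/4⌋}(sin(2kπ/m) − sin((2k+1)π/m)) < 0`. -/
theorem im_p_half_neg_of_mod_four_eq_three
    (m : ℕ) (hm : 7 ≤ m) (hm4 : m % 4 = 3)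
    (δ : ℕ → ℝ)
    (hδ1 : ∀ k, k ≤ m / 4 → δ k = 1)
    (hδ2 : ∀ k, m / 4 + 1 ≤ k → k ≤ m - m / 4 - 1 → δ k = -1)
    (hδ3 : ∀ k, m - m / 4 ≤ k → k ≤ m → δ k = 1) :
    (∑ k ∈ Finset.range ((m + 1) / 2),
        (δ k : ℂ) * Complex.exp (2 * Real.pi * Complex.I * k / m)).im < 0 ∧
      ∑ k ∈ Finset.range (m / 4 + 1),
        (Real.sin (2 * k * Real.pi / m) - Real.sin ((2 * k + 1) * Real.pi / m)) < 0 := by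
  obtain ⟨q, rfl⟩ : ∃ q, m = 4 * q + 3 := ⟨m / 4, by omega⟩
  have hq : 1 ≤ q := by omega
  have hq4 : (4 * q + 3) / 4 = q := by omega
  rw [hq4] at hδ1 hδ2 hδ3
  set M : ℝ := ((4 * q + 3 : ℕ) : ℝ) with hM
  have hMpos : (0 : ℝ) < M := by positivity
  have hMne : M ≠ 0 := ne_of_gt hMpos
  have hMval : M = 4 * (q : ℝ) + 3 := by rw [hM]; push_cast; ring
  have hpi := Real.pi_pos
  -- each term of the real sum is negative
  have key : ∀ k : ℕ, k ≤ q →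
      Real.sin (2 * k * Real.pi / M) - Real.sin ((2 * k + 1) * Real.pi / M) < 0 := by
    intro k hk
    have hk' : (k : ℝ) ≤ q := by exact_mod_cast hk
    have h1 : (2 * (k : ℝ) + 1) * Real.pi / M ≤ Real.pi / 2 := by
      rw [div_le_div_iff₀ hMpos (by norm_num)]
      nlinarith
    have h0 : (0 : ℝ) ≤ 2 * (k : ℝ) * Real.pi / M := by positivity
    have hlt : 2 * (k : ℝ) * Real.pi / M < (2 * (k : ℝ) + 1) * Real.pi / M := by
      rw [div_lt_div_iff₀ hMpos hMpos]
      nlinarith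
    have hneg : -(Real.pi / 2) ≤ (0 : ℝ) := by linarith
    have := Real.strictMonoOn_sin ⟨hneg.trans h0, hlt.le.trans h1⟩
      ⟨hneg.trans (h0.trans hlt.le), h1⟩ hlt
    linarith
  -- the second (real) sum is negative
  have hS : ∑ k ∈ Finset.range (q + 1),
      (Real.sin (2 * k * Real.pi / M) - Real.sin ((2 * k + 1) * Real.pi / M)) < 0 := by
    apply Finset.sum_neg
    · intro k hk
      exact key k (by simpa using Nat.lt_succ_iff.mp (Finset.mem_range.mp hk))
    · exact ⟨0, Finset.mem_range.mpr (Nat.succ_pos q)⟩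
  refine ⟨?_, by rw [hq4]; exact hS⟩
  -- now the imaginary part
  have hhalf : (4 * q + 3 + 1) / 2 = (q + 1) + (q + 1) := by omega
  have him : ∀ k : ℕ,
      ((δ k : ℂ) * Complex.exp (2 * Real.pi * Complex.I * k / (4 * q + 3 : ℕ))).im
        = δ k * Real.sin (2 * k * Real.pi / M) := by
    intro k
    have harg : (2 * Real.pi * Complex.I * k / (4 * q + 3 : ℕ) : ℂ)
        = ((2 * k * Real.pi / M : ℝ) : ℂ) * Complex.I := by
      rw [hM]
      have : ((4 * q + 3 : ℕ) : ℂ) ≠ 0 := Nat.cast_ne_zero.mpr (by omega)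
      push_cast
      field_simp
    rw [harg, Complex.mul_im, Complex.exp_ofReal_mul_I_im, Complex.exp_ofReal_mul_I_re,
      Complex.ofReal_re, Complex.ofReal_im]
    ring
  rw [Complex.im_sum, hhalf]
  simp only [him]
  rw [Finset.sum_range_add]
  have hfirst : ∀ k ∈ Finset.range (q + 1),
      δ k * Real.sin (2 * k * Real.pi / M) = Real.sin (2 * k * Real.pi / M) := by
    intro k hk
    have hk' : k < q + 1 := Finset.mem_range.mp hk
    rw [hδ1 k (by omega), one_mul]
  have hsecond : ∀ j ∈ Finset.range (q + 1),
      δ (q + 1 + j) * Real.sin (2 * (q + 1 + j : ℕ) * Real.pi / M)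
        = -Real.sin ((2 * ((q + 1 - 1 - j : ℕ)) + 1) * Real.pi / M) := by
    intro j hj
    have hj' : j ≤ q := by simpa using Nat.lt_succ_iff.mp (Finset.mem_range.mp hj)
    have hδ : δ (q + 1 + j) = -1 := hδ2 _ (by omega) (by omega)
    have hcast : ((q + 1 - 1 - j : ℕ) : ℝ) = (q : ℝ) - j := by
      have : q + 1 - 1 - j = q - j := by omega
      rw [this, Nat.cast_sub hj']
    have hangle : 2 * ((q + 1 + j : ℕ) : ℝ) * Real.pi / M
        = Real.pi - (2 * ((q + 1 - 1 - j : ℕ) : ℝ) + 1) * Real.pi / M := by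
      rw [hcast]
      push_cast
      rw [hMval]
      field_simp
      ring
    rw [hδ, hangle, Real.sin_pi_sub]
    ring
  rw [Finset.sum_congr rfl hfirst, Finset.sum_congr rfl hsecond,
    Finset.sum_neg_distrib, Finset.sum_range_reflect (fun k => Real.sin ((2 * (k : ℕ) + 1) * Real.pi / M)) (q + 1)]
  have : ∑ k ∈ Finset.range (q + 1), Real.sin (2 * k * Real.pi / M)
      + -∑ k ∈ Finset.range (q + 1), Real.sin ((2 * k + 1) * Real.pi / M)
      = ∑ k ∈ Finset.range (q + 1),
        (Real.sin (2 * k * Real.pi / M) - Real.sin ((2 * k + 1) * Real.pi / M)) := by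
    rw [Finset.sum_sub_distrib]
    ring
  rw [this]
  exact hS
end
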